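/- Let φ be a Θ-invariant pure state of the spin-1/2 chain algebra 𝔄 and Λ a subset of ℤ. Then Haag duality holds for Λ, i.e. π_φ(𝔄_Λ)'' = (π_φ(𝔄_{Λ^c}))', if and only if π_{φ₊}((𝔄_Λ)₊)'' = (π_{φ₊}((𝔄_{Λ^c})₊))' holds on the GNS space of the restriction φ₊ of φ to the even part (𝔄)₊. -/

import Mathlib

noncomputable section

open scoped ComplexOrder

local notation "⟪" x ", " y "⟫" => @inner ℂ _ _ x y

section AuxLemmas

variable {E F : Type*} [NormedAddCommGroup E] [InnerProductSpace ℂ E]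
  [NormedAddCommGroup F] [InnerProductSpace ℂ F]

lemma aux_norm_eq_of_inner {x : E} {y : F} (h : ⟪x, x⟫ = ⟪y, y⟫) : ‖x‖ = ‖y‖ := by
  rw [inner_self_eq_norm_sq_to_K, inner_self_eq_norm_sq_to_K] at h
  have h1 : ((‖x‖ : ℂ)) ^ 2 = ((‖y‖ : ℂ)) ^ 2 := h
  have h2 : (‖x‖ : ℂ) = ‖y‖ ∨ (‖x‖ : ℂ) = -‖y‖ := sq_eq_sq_iff_eq_or_eq_neg.mp h1
  rcases h2 with h2 | h2
  · exact_mod_cast h2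
  · have hx : (‖x‖ : ℝ) = -‖y‖ := by exact_mod_cast h2
    have := norm_nonneg x; have := norm_nonneg y; linarith

lemma aux_clm_ext_dense {f g : E →L[ℂ] F} {s : Set E} (hs : Dense s)
    (h : ∀ x ∈ s, f x = g x) : f = g := by
  ext x
  have hcl : IsClosed {x : E | f x = g x} := isClosed_eq f.continuous g.continuous
  have : closure s ⊆ {x : E | f x = g x} := hcl.closure_subset_iff.mpr h
  exact this (by rw [hs.closure_eq]; trivial)

/-- extension of a densely defined isometric-on-range linear map -/
lemma aux_extend_isometry {D : Type*} [AddCommGroup D] [Module ℂ D]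
    [CompleteSpace F]
    (L₁ : D →ₗ[ℂ] E) (L₂ : D →ₗ[ℂ] F) (hn : ∀ d, ‖L₂ d‖ = ‖L₁ d‖)
    (hd : Dense (Set.range L₁ : Set E)) :
    ∃ J : E →L[ℂ] F, (∀ x, ‖J x‖ = ‖x‖) ∧ ∀ d, J (L₁ d) = L₂ d := by
  have hdR : Dense ((LinearMap.range L₁ : Set E)) := by rw [LinearMap.coe_range]; exact hd
  have hker : LinearMap.ker L₁ ≤ LinearMap.ker L₂ := by
    intro d hdk
    have h1 : L₁ d = 0 := hdk
    have : ‖L₂ d‖ = 0 := by rw [hn, h1, norm_zero]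
    simpa [LinearMap.mem_ker] using norm_eq_zero.mp this
  set q := L₁.quotKerEquivRange with hq
  set l2q := (LinearMap.ker L₁).liftQ L₂ hker with hl2q
  set g : (LinearMap.range L₁) →ₗ[ℂ] F := l2q.comp q.symm.toLinearMap with hgdef
  have hg : ∀ d : D, g ⟨L₁ d, LinearMap.mem_range_self L₁ d⟩ = L₂ d := by
    intro d
    have h1 : q (Submodule.Quotient.mk d) = ⟨L₁ d, LinearMap.mem_range_self L₁ d⟩ :=
      Subtype.ext (L₁.quotKerEquivRange_apply_mk d)
    have h2 : q.symm ⟨L₁ d, LinearMap.mem_range_self L₁ d⟩ = Submodule.Quotient.mk d := by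
      rw [← h1, LinearEquiv.symm_apply_apply]
    simp [hgdef, h2, hl2q, Submodule.liftQ_apply]
  have hgn : ∀ s : (LinearMap.range L₁), ‖g s‖ = ‖(s : E)‖ := by
    rintro ⟨x, hx⟩
    obtain ⟨d, rfl⟩ := hx
    rw [show (⟨L₁ d, ⟨d, rfl⟩⟩ : LinearMap.range L₁) = ⟨L₁ d, LinearMap.mem_range_self L₁ d⟩ from rfl,
      hg d]
    exact hn d
  set gL : (LinearMap.range L₁) →L[ℂ] F :=
    g.mkContinuous 1 (fun s => by rw [hgn]; simp) with hgL
  set eL : (LinearMap.range L₁) →L[ℂ] E := (LinearMap.range L₁).subtypeL with heL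
  have hde : DenseRange eL := by
    have : Set.range eL = (LinearMap.range L₁ : Set E) := Subtype.range_coe
    rw [DenseRange, this]; exact hdR
  have hui : IsUniformInducing eL := isometry_subtype_coe.isUniformInducing
  refine ⟨gL.extend eL, ?_, ?_⟩
  · intro x
    have hcl : IsClosed {x : E | ‖gL.extend eL x‖ = ‖x‖} :=
      isClosed_eq (gL.extend eL).continuous.norm continuous_norm
    have hsub : (LinearMap.range L₁ : Set E) ⊆ {x : E | ‖gL.extend eL x‖ = ‖x‖} := by
      rintro _ ⟨d, rfl⟩
      have h1 : gL.extend eL (eL ⟨L₁ d, LinearMap.mem_range_self L₁ d⟩)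
          = gL ⟨L₁ d, LinearMap.mem_range_self L₁ d⟩ :=
        ContinuousLinearMap.extend_eq gL hde hui _
      have h2 : eL (⟨L₁ d, LinearMap.mem_range_self L₁ d⟩ : LinearMap.range L₁) = L₁ d := rfl
      have h3 : gL (⟨L₁ d, LinearMap.mem_range_self L₁ d⟩ : LinearMap.range L₁) = L₂ d := hg d
      simp only [Set.mem_setOf_eq]
      rw [← h2, h1, h3, hn d, h2]
    have : closure (LinearMap.range L₁ : Set E) ⊆ _ := hcl.closure_subset_iff.mpr hsub
    exact this (by rw [hdR.closure_eq]; trivial)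
  · intro d
    have h1 : gL.extend eL (eL ⟨L₁ d, LinearMap.mem_range_self L₁ d⟩)
        = gL ⟨L₁ d, LinearMap.mem_range_self L₁ d⟩ :=
      ContinuousLinearMap.extend_eq gL hde hui _
    have h2 : eL (⟨L₁ d, LinearMap.mem_range_self L₁ d⟩ : LinearMap.range L₁) = L₁ d := rfl
    have h3 : gL (⟨L₁ d, LinearMap.mem_range_self L₁ d⟩ : LinearMap.range L₁) = L₂ d := hg d
    rw [← h2, h1, h3]

end AuxLemmas

/-- the Pauli matrix σ_z; conjugation by it implements the parity automorphism on one site -/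
def pauliZ : Matrix (Fin 2) (Fin 2) ℂ := !![1, 0; 0, -1]

/-- the Pauli matrix σ_x -/
def pauliX : Matrix (Fin 2) (Fin 2) ℂ := !![0, 1; 1, 0]

lemma pauliX_mul_self : pauliX * pauliX = 1 := by
  ext i j
  fin_cases i <;> fin_cases j <;>
    simp [pauliX, Matrix.mul_apply, Fin.sum_univ_two, Matrix.one_apply]

lemma pauliZ_mul_self : pauliZ * pauliZ = 1 := by
  ext i j
  fin_cases i <;> fin_cases j <;>
    simp [pauliZ, Matrix.mul_apply, Fin.sum_univ_two, Matrix.one_apply]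

lemma pauliZ_conj_pauliX : pauliZ * pauliX * pauliZ = -pauliX := by
  ext i j
  fin_cases i <;> fin_cases j <;>
    simp [pauliZ, pauliX, Matrix.mul_apply, Fin.sum_univ_two]

set_option maxHeartbeats 4000000 in
theorem haag_duality_iff_even_duality_spin
    -- the quasi-local C*-algebra of the spin chain, with one-site algebra `M₂(ℂ)`
    (A : Type) [CStarAlgebra A]
    (ι : ℤ → (Matrix (Fin 2) (Fin 2) ℂ →⋆ₐ[ℂ] A))
    (hιinj : ∀ j, Function.Injective (ι j))
    (hιcomm : ∀ j k, j ≠ k → ∀ m m', Commute (ι j m) (ι k m'))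
    -- the local algebras 𝔄_Λ
    (loc : Set ℤ → Set A)
    (hloc : ∀ Λ : Set ℤ, loc Λ =
      ((StarAlgebra.adjoin ℂ (⋃ j ∈ Λ, Set.range (ι j))).topologicalClosure : Set A))
    (hgen : loc Set.univ = Set.univ)
    -- the parity automorphism Θ : σ_x,σ_y ↦ -σ_x,-σ_y, σ_z ↦ σ_z
    (Θ : A ≃⋆ₐ[ℂ] A)
    (hΘ : ∀ j m, Θ (ι j m) = ι j (pauliZ * m * pauliZ))
    -- the even part (𝔄)₊, presented as the range of an injective *-homomorphism
    (Aev : Type) [CStarAlgebra Aev] (e : Aev →⋆ₐ[ℂ] A)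
    (heinj : Function.Injective e)
    (herange : Set.range (⇑e) = {a : A | Θ a = a})
    -- a Θ-invariant state φ
    (φ : A →ₗ[ℂ] ℂ)
    (hφpos : ∀ a, 0 ≤ φ (star a * a))
    (hφone : φ 1 = 1)
    (hφΘ : ∀ a, φ (Θ a) = φ a)
    -- the GNS representation of φ
    (H : Type) [NormedAddCommGroup H] [InnerProductSpace ℂ H] [CompleteSpace H]
    (π : A →⋆ₐ[ℂ] (H →L[ℂ] H)) (Ω : H)
    (hGNS : ∀ a, φ a = ⟪Ω, π a Ω⟫)
    (hcyc : Dense ((Submodule.span ℂ (Set.range fun a => π a Ω) : Submodule ℂ H) : Set H))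
    -- φ is pure : the GNS representation is irreducible
    (hpure : ∀ T ∈ Set.centralizer (Set.range (⇑π)), ∃ c : ℂ, T = c • (1 : H →L[ℂ] H))
    -- the GNS representation of the restriction φ₊ = φ ∘ e of φ to the even part
    (Hp : Type) [NormedAddCommGroup Hp] [InnerProductSpace ℂ Hp] [CompleteSpace Hp]
    (πp : Aev →⋆ₐ[ℂ] (Hp →L[ℂ] Hp)) (Ωp : Hp)
    (hGNSp : ∀ x, φ (e x) = ⟪Ωp, πp x Ωp⟫)
    (hcycp : Dense ((Submodule.span ℂ (Set.range fun x => πp x Ωp) : Submodule ℂ Hp) : Set Hp))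
    -- a subset Λ of ℤ
    (Λ : Set ℤ) :
    -- Conclusion: Haag duality for Λ holds iff the even duality holds for φ₊
    (Set.centralizer (Set.centralizer (⇑π '' loc Λ)) = Set.centralizer (⇑π '' loc Λᶜ)) ↔
      (Set.centralizer (Set.centralizer (⇑πp '' (⇑e ⁻¹' loc Λ))) =
        Set.centralizer (⇑πp '' (⇑e ⁻¹' loc Λᶜ))) := by
  classical
  -- ## Part 0 : algebraic preliminaries
  have hπcont : Continuous π :=
    AddMonoidHomClass.continuous_of_bound π 1
      (by simpa only [one_mul] using fun a => NonUnitalStarAlgHom.norm_apply_le π a)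
  have hΘcont : Continuous Θ := (StarAlgEquiv.isometry Θ).continuous
  have hloc' : ∀ X : Set ℤ, loc X =
      closure ((StarAlgebra.adjoin ℂ (⋃ j ∈ X, Set.range (ι j)) : StarSubalgebra ℂ A) : Set A) :=
    fun X => by rw [hloc X, StarSubalgebra.topologicalClosure_coe]
  have hgenmem : ∀ (X : Set ℤ) (j : ℤ), j ∈ X → ∀ m, ι j m ∈ loc X := by
    intro X j hj m
    rw [hloc' X]
    exact subset_closure (StarAlgebra.subset_adjoin ℂ _
      (Set.mem_biUnion hj ⟨m, rfl⟩))
  have hlocAlg : ∀ (X : Set ℤ) (c : ℂ), algebraMap ℂ A c ∈ loc X := by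
    intro X c
    rw [hloc' X]
    exact subset_closure (algebraMap_mem _ c)
  -- membership closure properties of loc X
  have hlocMem : ∀ (X : Set ℤ) (a : A), a ∈ loc X ↔
      a ∈ (StarAlgebra.adjoin ℂ (⋃ j ∈ X, Set.range (ι j))).topologicalClosure := by
    intro X a; rw [hloc X]; rfl
  have hlocMul : ∀ (X : Set ℤ) (a b : A), a ∈ loc X → b ∈ loc X → a * b ∈ loc X := by
    intro X a b ha hb
    rw [hlocMem] at ha hb ⊢; exact mul_mem ha hb
  have hlocAdd : ∀ (X : Set ℤ) (a b : A), a ∈ loc X → b ∈ loc X → a + b ∈ loc X := by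
    intro X a b ha hb
    rw [hlocMem] at ha hb ⊢; exact add_mem ha hb
  have hlocSub : ∀ (X : Set ℤ) (a b : A), a ∈ loc X → b ∈ loc X → a - b ∈ loc X := by
    intro X a b ha hb
    rw [hlocMem] at ha hb ⊢; exact sub_mem ha hb
  have hlocSmul : ∀ (X : Set ℤ) (c : ℂ) (a : A), a ∈ loc X → c • a ∈ loc X := by
    intro X c a ha
    rw [hlocMem] at ha ⊢; exact SMulMemClass.smul_mem c ha
  have hlocStar : ∀ (X : Set ℤ) (a : A), a ∈ loc X → star a ∈ loc X := by
    intro X a ha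
    rw [hlocMem] at ha ⊢; exact star_mem ha
  -- the closure-induction workhorse
  have hclosure_ind : ∀ (X : Set ℤ) (p : A → Prop), IsClosed {a : A | p a} →
      (∀ j ∈ X, ∀ m, p (ι j m)) → (∀ c : ℂ, p (algebraMap ℂ A c)) →
      (∀ x y, p x → p y → p (x + y)) → (∀ x y, p x → p y → p (x * y)) →
      (∀ x, p x → p (star x)) → ∀ a ∈ loc X, p a := by
    intro X p hcl hgens halg hadd hmul hstar a ha
    rw [hloc' X] at ha
    refine hcl.closure_subset_iff.mpr ?_ ha
    intro x hx
    have hx' : x ∈ StarAlgebra.adjoin ℂ (⋃ j ∈ X, Set.range (ι j)) := hx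
    clear hx
    induction hx' using StarAlgebra.adjoin_induction with
    | mem y hy =>
      obtain ⟨s, ⟨j, rfl⟩, hs⟩ := hy
      obtain ⟨t, ⟨hj, rfl⟩, ht⟩ := hs
      obtain ⟨m, rfl⟩ := ht
      exact hgens j hj m
    | algebraMap c => exact halg c
    | add x y hx hy ihx ihy => exact hadd x y ihx ihy
    | mul x y hx hy ihx ihy => exact hmul x y ihx ihy
    | star x hx ihx => exact hstar x ihx

  -- Θ fixes scalars
  have hΘalg : ∀ c : ℂ, Θ (algebraMap ℂ A c) = algebraMap ℂ A c := by
    intro c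
    rw [Algebra.algebraMap_eq_smul_one, map_smul, map_one]
  -- Θ is an involution
  have hΘΘ : ∀ a : A, Θ (Θ a) = a := by
    have key : ∀ a ∈ loc Set.univ, Θ (Θ a) = a := by
      refine hclosure_ind Set.univ (fun a => Θ (Θ a) = a) ?_ ?_ ?_ ?_ ?_ ?_
      · exact isClosed_eq (hΘcont.comp hΘcont) continuous_id
      · intro j _ m
        rw [hΘ, hΘ]
        congr 1
        calc pauliZ * (pauliZ * m * pauliZ) * pauliZ
            = pauliZ * pauliZ * m * (pauliZ * pauliZ) := by noncomm_ring
          _ = m := by rw [pauliZ_mul_self, one_mul, mul_one]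
      · intro c; rw [hΘalg, hΘalg]
      · intro x y hx hy; rw [map_add, map_add, hx, hy]
      · intro x y hx hy; rw [map_mul, map_mul, hx, hy]
      · intro x hx; rw [map_star, map_star, hx]
    intro a
    exact key a (by rw [hgen]; trivial)
  -- Θ preserves the local algebras
  have hΘloc : ∀ (X : Set ℤ) (a : A), a ∈ loc X → Θ a ∈ loc X := by
    intro X
    have hclLoc : IsClosed (loc X) := by rw [hloc' X]; exact isClosed_closure
    refine hclosure_ind X (fun a => Θ a ∈ loc X) ?_ ?_ ?_ ?_ ?_ ?_
    · exact hclLoc.preimage hΘcont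
    · intro j hj m; rw [hΘ]; exact hgenmem X j hj _
    · intro c; rw [hΘalg]; exact hlocAlg X c
    · intro x y hx hy; rw [map_add]; exact hlocAdd X _ _ hx hy
    · intro x y hx hy; rw [map_mul]; exact hlocMul X _ _ hx hy
    · intro x hx; rw [map_star]; exact hlocStar X _ hx
  -- locality at the algebra level
  have hcomm1 : ∀ (X : Set ℤ) (a : A), a ∈ loc X → ∀ j, j ∉ X → ∀ m, Commute a (ι j m) := by
    intro X
    refine hclosure_ind X (fun a => ∀ j, j ∉ X → ∀ m, Commute a (ι j m)) ?_ ?_ ?_ ?_ ?_ ?_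
    · have : {a : A | ∀ j, j ∉ X → ∀ m, Commute a (ι j m)} =
          ⋂ (j : ℤ) (_ : j ∉ X) (m : Matrix (Fin 2) (Fin 2) ℂ),
            {a : A | a * ι j m = ι j m * a} := by
        ext a
        simp only [Set.mem_iInter, Set.mem_setOf_eq]
        exact ⟨fun h j hj m => (h j hj m).eq, fun h j hj m => commute_iff_eq _ _ |>.mpr (h j hj m)⟩
      rw [this]
      exact isClosed_iInter fun j => isClosed_iInter fun hj => isClosed_iInter fun m =>
        isClosed_eq (continuous_id.mul continuous_const) (continuous_const.mul continuous_id)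
    · intro k hk m'; intro j hj m
      exact hιcomm k j (fun h => hj (h ▸ hk)) m' m
    · intro c j hj m
      exact commute_iff_eq _ _ |>.mpr (Algebra.commutes c (ι j m))
    · intro x y hx hy j hj m; exact (hx j hj m).add_left (hy j hj m)
    · intro x y hx hy j hj m; exact (hx j hj m).mul_left (hy j hj m)
    · intro x hx j hj m
      have h1 : Commute x (ι j (star m)) := hx j hj (star m)
      rw [commute_iff_eq]
      calc star x * ι j m = star x * star (ι j (star m)) := by rw [map_star, star_star]
        _ = star (ι j (star m) * x) := (star_mul _ _).symm
        _ = star (x * ι j (star m)) := by rw [h1.eq]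
        _ = star (ι j (star m)) * star x := star_mul _ _
        _ = ι j m * star x := by rw [map_star, star_star]
  have hcomm2 : ∀ (X Y : Set ℤ), (∀ j ∈ Y, j ∉ X) →
      ∀ a ∈ loc X, ∀ b ∈ loc Y, Commute a b := by
    intro X Y hXY a ha
    have key : ∀ b ∈ loc Y, Commute a b ∧ Commute (star a) b := by
      refine hclosure_ind Y (fun b => Commute a b ∧ Commute (star a) b) ?_ ?_ ?_ ?_ ?_ ?_
      · have : {b : A | Commute a b ∧ Commute (star a) b} =
            {b : A | a * b = b * a} ∩ {b : A | star a * b = b * star a} := by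
          ext b
          simp only [Set.mem_inter_iff, Set.mem_setOf_eq]
          exact ⟨fun h => ⟨h.1.eq, h.2.eq⟩,
            fun h => ⟨commute_iff_eq _ _ |>.mpr h.1, commute_iff_eq _ _ |>.mpr h.2⟩⟩
        rw [this]
        exact (isClosed_eq (continuous_const.mul continuous_id)
            (continuous_id.mul continuous_const)).inter
          (isClosed_eq (continuous_const.mul continuous_id)
            (continuous_id.mul continuous_const))
      · intro j hj m
        exact ⟨hcomm1 X a ha j (hXY j hj) m, hcomm1 X _ (hlocStar X a ha) j (hXY j hj) m⟩
      · intro c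
        exact ⟨commute_iff_eq _ _ |>.mpr (Algebra.commutes c a).symm,
          commute_iff_eq _ _ |>.mpr (Algebra.commutes c (star a)).symm⟩
      · intro x y hx hy; exact ⟨hx.1.add_right hy.1, hx.2.add_right hy.2⟩
      · intro x y hx hy; exact ⟨hx.1.mul_right hy.1, hx.2.mul_right hy.2⟩
      · intro x hx
        constructor
        · rw [commute_iff_eq]
          calc a * star x = star (star a) * star x := by rw [star_star]
            _ = star (x * star a) := (star_mul _ _).symm
            _ = star (star a * x) := by rw [hx.2.eq]
            _ = star x * star (star a) := star_mul _ _
            _ = star x * a := by rw [star_star]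
        · rw [commute_iff_eq]
          calc star a * star x = star (x * a) := (star_mul _ _).symm
            _ = star (a * x) := by rw [hx.1.eq]
            _ = star x * star a := star_mul _ _
    exact fun b hb => (key b hb).1

  -- ## Part 1 : the GNS implementer U of Θ
  set L : A →ₗ[ℂ] H :=
    { toFun := fun a => π a Ω
      map_add' := fun a b => by
        show π (a + b) Ω = π a Ω + π b Ω
        rw [map_add]; rfl
      map_smul' := fun c a => by
        show π (c • a) Ω = c • π a Ω
        rw [map_smul]; rfl } with hLdef
  have hLa : ∀ a : A, L a = π a Ω := fun a => rfl
  have hLdense : Dense (Set.range ⇑L : Set H) := by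
    have h2 : (Submodule.span ℂ (Set.range ⇑L) : Set H) = Set.range ⇑L := by
      apply subset_antisymm
      · intro x hx
        have hle : Submodule.span ℂ (Set.range ⇑L) ≤ LinearMap.range L :=
          Submodule.span_le.mpr fun y hy => hy
        obtain ⟨d, hd⟩ := hle hx
        exact ⟨d, hd⟩
      · exact Submodule.subset_span
    rw [← h2]
    exact hcyc
  have hstarπ : ∀ a : A, π (star a) = ContinuousLinearMap.adjoint (π a) := by
    intro a; rw [← ContinuousLinearMap.star_eq_adjoint, map_star]
  have hLinner : ∀ a b : A, ⟪L a, L b⟫ = φ (star a * b) := by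
    intro a b
    have h : φ (star a * b) = ⟪π a Ω, π b Ω⟫ := by
      rw [hGNS, map_mul, ContinuousLinearMap.mul_apply, hstarπ,
        ContinuousLinearMap.adjoint_inner_right]
    rw [h]; rfl
  set LΘ : A →ₗ[ℂ] H :=
    { toFun := fun a => L (Θ a)
      map_add' := fun a b => by
        show L (Θ (a + b)) = L (Θ a) + L (Θ b)
        rw [map_add, map_add]
      map_smul' := fun c a => by
        show L (Θ (c • a)) = c • L (Θ a)
        rw [map_smul, map_smul] } with hLΘdef
  have hnormΘ : ∀ a, ‖LΘ a‖ = ‖L a‖ := by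
    intro a
    refine aux_norm_eq_of_inner ?_
    show ⟪L (Θ a), L (Θ a)⟫ = ⟪L a, L a⟫
    rw [hLinner, hLinner, ← map_star Θ, ← map_mul, hφΘ]
  obtain ⟨U, hUiso, hUL⟩ := aux_extend_isometry L LΘ hnormΘ hLdense
  have hULa : ∀ a, U (L a) = L (Θ a) := hUL
  have hLmul : ∀ a b : A, π a (L b) = L (a * b) := by
    intro a b
    show π a (π b Ω) = π (a * b) Ω
    rw [map_mul]; rfl
  have hUU : U * U = (1 : H →L[ℂ] H) := by
    refine aux_clm_ext_dense (f := U * U) (g := 1) hLdense ?_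
    rintro _ ⟨a, rfl⟩
    simp only [ContinuousLinearMap.mul_apply, ContinuousLinearMap.one_apply, hULa, hΘΘ]
  have hUπ : ∀ a : A, U * π a = π (Θ a) * U := by
    intro a
    refine aux_clm_ext_dense hLdense ?_
    rintro _ ⟨b, rfl⟩
    rw [ContinuousLinearMap.mul_apply, ContinuousLinearMap.mul_apply, hLmul, hULa, hULa,
      hLmul, map_mul]
  have hUinner : ∀ ξ η : H, ⟪U ξ, U η⟫ = ⟪ξ, η⟫ := fun ξ η =>
    LinearIsometry.inner_map_map ⟨(U : H →ₗ[ℂ] H), hUiso⟩ ξ η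
  have hUsym : ∀ ξ η : H, ⟪U ξ, η⟫ = ⟪ξ, U η⟫ := by
    intro ξ η
    have h1 : η = U (U η) := by
      have := congrArg (fun T : H →L[ℂ] H => T η) hUU
      simpa [ContinuousLinearMap.mul_apply] using this.symm
    conv_lhs => rw [h1]
    rw [hUinner]
  set P : H →L[ℂ] H := (2⁻¹ : ℂ) • (1 + U) with hPdef
  have hUP : U * P = P := by
    rw [hPdef, mul_smul_comm, mul_add, mul_one, hUU, add_comm]
  have hPU : P * U = P := by
    rw [hPdef, smul_mul_assoc, add_mul, one_mul, hUU, add_comm]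
  have hPP : P * P = P := by
    nth_rewrite 1 [hPdef]
    rw [smul_mul_assoc, add_mul, one_mul, hUP, ← two_smul ℂ P, smul_smul]
    norm_num
  have hPsym : ∀ ξ η : H, ⟪P ξ, η⟫ = ⟪ξ, P η⟫ := by
    intro ξ η
    have hconj : (starRingEnd ℂ) (2⁻¹ : ℂ) = 2⁻¹ := by
      rw [map_inv₀, Complex.conj_ofNat]
    rw [hPdef]
    simp only [ContinuousLinearMap.smul_apply, ContinuousLinearMap.add_apply,
      ContinuousLinearMap.one_apply, inner_smul_left, inner_smul_right, inner_add_left,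
      inner_add_right, hUsym, hconj]
  have hPπeven : ∀ a : A, Θ a = a → π a * P = P * π a := by
    intro a ha
    have h1 : π a * U = U * π a := by rw [hUπ a, ha]
    rw [hPdef, mul_smul_comm, smul_mul_assoc]
    congr 1
    rw [mul_add, add_mul, mul_one, one_mul, h1]

  -- ## Part 2 : the GNS isometry W : Hp → H
  have hΘe : ∀ x : Aev, Θ (e x) = e x := by
    intro x
    have h : e x ∈ {a : A | Θ a = a} := herange ▸ Set.mem_range_self x
    exact h
  have hevenRange : ∀ a : A, Θ a = a → ∃ x : Aev, e x = a := by
    intro a ha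
    have h : a ∈ Set.range ⇑e := by rw [herange]; exact ha
    exact h
  set Lp : Aev →ₗ[ℂ] Hp :=
    { toFun := fun x => πp x Ωp
      map_add' := fun a b => by
        show πp (a + b) Ωp = πp a Ωp + πp b Ωp
        rw [map_add]; rfl
      map_smul' := fun c a => by
        show πp (c • a) Ωp = c • πp a Ωp
        rw [map_smul]; rfl } with hLpdef
  have hLpdense : Dense (Set.range ⇑Lp : Set Hp) := by
    have h2 : (Submodule.span ℂ (Set.range ⇑Lp) : Set Hp) = Set.range ⇑Lp := by
      apply subset_antisymm
      · intro x hx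
        have hle : Submodule.span ℂ (Set.range ⇑Lp) ≤ LinearMap.range Lp :=
          Submodule.span_le.mpr fun y hy => hy
        obtain ⟨d, hd⟩ := hle hx
        exact ⟨d, hd⟩
      · exact Submodule.subset_span
    rw [← h2]
    exact hcycp
  have hstarπp : ∀ x : Aev, πp (star x) = ContinuousLinearMap.adjoint (πp x) := by
    intro x; rw [← ContinuousLinearMap.star_eq_adjoint, map_star]
  have hLpinner : ∀ x y : Aev, ⟪Lp x, Lp y⟫ = φ (e (star x * y)) := by
    intro x y
    have h : φ (e (star x * y)) = ⟪πp x Ωp, πp y Ωp⟫ := by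
      rw [hGNSp, map_mul, ContinuousLinearMap.mul_apply, hstarπp,
        ContinuousLinearMap.adjoint_inner_right]
    rw [h]; rfl
  set Le : Aev →ₗ[ℂ] H :=
    { toFun := fun x => L (e x)
      map_add' := fun a b => by
        show L (e (a + b)) = L (e a) + L (e b)
        rw [map_add, map_add]
      map_smul' := fun c a => by
        show L (e (c • a)) = c • L (e a)
        rw [map_smul, map_smul] } with hLedef
  have hnormW : ∀ x, ‖Le x‖ = ‖Lp x‖ := by
    intro x
    refine aux_norm_eq_of_inner ?_
    show ⟪L (e x), L (e x)⟫ = ⟪Lp x, Lp x⟫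
    rw [hLinner, hLpinner, ← map_star e, ← map_mul e]
  obtain ⟨W, hWiso, hWL⟩ := aux_extend_isometry Lp Le hnormW hLpdense
  have hWLp : ∀ x, W (Lp x) = L (e x) := hWL
  have hπpLp : ∀ x y : Aev, πp x (Lp y) = Lp (x * y) := by
    intro x y
    show πp x (πp y Ωp) = πp (x * y) Ωp
    rw [map_mul]; rfl
  have hWπ : ∀ (x : Aev) (ξ : Hp), W (πp x ξ) = π (e x) (W ξ) := by
    intro x
    have h : W.comp (πp x) = (π (e x)).comp W := by
      refine aux_clm_ext_dense hLpdense ?_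
      rintro _ ⟨y, rfl⟩
      simp only [ContinuousLinearMap.comp_apply]
      rw [hπpLp, hWLp, hWLp, map_mul, ← hLmul]
    intro ξ
    have := ContinuousLinearMap.ext_iff.mp h ξ
    simpa only [ContinuousLinearMap.comp_apply] using this
  have hWinner : ∀ ξ η, ⟪W ξ, W η⟫ = ⟪ξ, η⟫ := fun ξ η =>
    LinearIsometry.inner_map_map ⟨(W : Hp →ₗ[ℂ] H), hWiso⟩ ξ η
  set Ws : H →L[ℂ] Hp := ContinuousLinearMap.adjoint W with hWsdef
  have hWsW : ∀ ξ : Hp, Ws (W ξ) = ξ := by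
    intro ξ
    refine ext_inner_left ℂ ?_
    intro v
    rw [hWsdef, ContinuousLinearMap.adjoint_inner_right, hWinner]
  have hWsπ : ∀ (x : Aev) (ξ : H), Ws (π (e x) ξ) = πp x (Ws ξ) := by
    intro x ξ
    refine ext_inner_left ℂ ?_
    intro v
    rw [hWsdef, ContinuousLinearMap.adjoint_inner_right]
    have h1 : π (e x) = ContinuousLinearMap.adjoint (π (e (star x))) := by
      rw [← hstarπ (e (star x)), ← map_star e, star_star]
    rw [h1, ContinuousLinearMap.adjoint_inner_right, ← hWπ]
    rw [show (⟪W (πp (star x) v), ξ⟫ : ℂ) = ⟪πp (star x) v, Ws ξ⟫ from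
      (ContinuousLinearMap.adjoint_inner_right W _ ξ).symm]
    rw [hstarπp, ContinuousLinearMap.adjoint_inner_left]
  have hPW : ∀ ξ : Hp, P (W ξ) = W ξ := by
    have h : P.comp W = W := by
      refine aux_clm_ext_dense hLpdense ?_
      rintro _ ⟨x, rfl⟩
      simp only [ContinuousLinearMap.comp_apply]
      rw [hWLp, hPdef]
      simp only [ContinuousLinearMap.smul_apply, ContinuousLinearMap.add_apply,
        ContinuousLinearMap.one_apply]
      rw [hULa, hΘe, ← two_smul ℂ (L (e x)), smul_smul]
      norm_num
    intro ξ
    have := ContinuousLinearMap.ext_iff.mp h ξ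
    simpa only [ContinuousLinearMap.comp_apply] using this
  have hWsP : ∀ ξ : H, Ws (P ξ) = Ws ξ := by
    intro ξ
    refine ext_inner_left ℂ ?_
    intro v
    rw [hWsdef, ContinuousLinearMap.adjoint_inner_right,
      ContinuousLinearMap.adjoint_inner_right, ← hPsym, hPW]
  have hWWs : ∀ ξ : H, W (Ws ξ) = P ξ := by
    choose xa hxa using fun a : A =>
      hevenRange ((2⁻¹ : ℂ) • (a + Θ a)) (by rw [map_smul, map_add, hΘΘ, add_comm])
    have hWsL : ∀ a : A, Ws (L a) = Lp (xa a) := by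
      intro a
      refine ext_inner_left ℂ ?_
      intro v
      rw [hWsdef, ContinuousLinearMap.adjoint_inner_right]
      have hfun : (fun v : Hp => (⟪W v, L a⟫ : ℂ)) = fun v => ⟪v, Lp (xa a)⟫ := by
        refine Continuous.ext_on hLpdense ?_ ?_ ?_
        · exact Continuous.inner W.continuous continuous_const
        · exact Continuous.inner continuous_id continuous_const
        · rintro _ ⟨y, rfl⟩
          show (⟪W (Lp y), L a⟫ : ℂ) = ⟪Lp y, Lp (xa a)⟫
          rw [hWLp, hLinner, hLpinner, map_mul e, map_star e, hxa]
          rw [mul_smul_comm, mul_add, map_smul φ, map_add φ]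
          have hswap : φ (star (e y) * Θ a) = φ (star (e y) * a) := by
            have h2 : star (e y) * Θ a = Θ (star (e y) * a) := by
              rw [map_mul, map_star, hΘe]
            rw [h2, hφΘ]
          rw [hswap, smul_eq_mul]
          ring
      exact congrFun hfun v
    have h : W.comp Ws = P := by
      refine aux_clm_ext_dense hLdense ?_
      rintro _ ⟨a, rfl⟩
      simp only [ContinuousLinearMap.comp_apply]
      rw [hWsL, hWLp, hxa, map_smul, map_add, hPdef]
      simp only [ContinuousLinearMap.smul_apply, ContinuousLinearMap.add_apply,
        ContinuousLinearMap.one_apply]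
      rw [hULa]
    intro ξ
    have := ContinuousLinearMap.ext_iff.mp h ξ
    simpa only [ContinuousLinearMap.comp_apply] using this

  -- ## Part 3 : transfer machinery and parity toolbox
  set Phi : (Hp →L[ℂ] Hp) → (H →L[ℂ] H) := fun T => W ∘L T ∘L Ws with hPhidef
  have hΦap : ∀ T ξ, Phi T ξ = W (T (Ws ξ)) := fun T ξ => rfl
  have hΨΦap : ∀ (T : Hp →L[ℂ] Hp) (η : Hp), Ws (Phi T (W η)) = T η := by
    intro T η
    rw [hΦap, hWsW, hWsW]
  set Cor : (H →L[ℂ] H) → Prop := fun T => P * T * P = T with hCorDef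
  set EC : Set ℤ → (H →L[ℂ] H) → Prop :=
    fun X T => ∀ a : A, a ∈ loc X → Θ a = a → Commute (π a) T with hECdef
  set FC : Set ℤ → (H →L[ℂ] H) → Prop :=
    fun X T => ∀ a : A, a ∈ loc X → Commute (π a) T with hFCdef
  have hCorPhi : ∀ T, Cor (Phi T) := by
    intro T
    show P * Phi T * P = Phi T
    ext ξ
    simp only [ContinuousLinearMap.mul_apply, hΦap, hWsP, hPW]
  have hΦmul : ∀ S T, Phi S * Phi T = Phi (S * T) := by
    intro S T
    ext ξ
    simp only [ContinuousLinearMap.mul_apply, hΦap, hWsW]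
  have hΦinj : ∀ S T, Phi S = Phi T → S = T := by
    intro S T h
    ext η
    rw [← hΨΦap S η, ← hΨΦap T η, h]
  have hΦcommFwd : ∀ (x : Aev) (T), Commute (πp x) T → Commute (π (e x)) (Phi T) := by
    intro x T h
    rw [commute_iff_eq]
    ext ξ
    simp only [ContinuousLinearMap.mul_apply, hΦap]
    rw [← hWπ]
    have h1 : πp x (T (Ws ξ)) = T (πp x (Ws ξ)) := by
      have := congrArg (fun f : Hp →L[ℂ] Hp => f (Ws ξ)) h.eq
      simpa only [ContinuousLinearMap.mul_apply] using this
    rw [h1, ← hWsπ]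
  have hΦcommBwd : ∀ (x : Aev) (T), Commute (π (e x)) (Phi T) → Commute (πp x) T := by
    intro x T h
    rw [commute_iff_eq]
    ext ξ
    simp only [ContinuousLinearMap.mul_apply]
    have hcm : ∀ η : H, π (e x) (Phi T η) = Phi T (π (e x) η) := by
      intro η
      have := congrArg (fun f : H →L[ℂ] H => f η) h.eq
      simpa only [ContinuousLinearMap.mul_apply] using this
    calc πp x (T ξ) = πp x (Ws (Phi T (W ξ))) := by rw [hΨΦap]
      _ = Ws (π (e x) (Phi T (W ξ))) := (hWsπ _ _).symm
      _ = Ws (Phi T (π (e x) (W ξ))) := by rw [hcm]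
      _ = Ws (Phi T (W (πp x ξ))) := by rw [← hWπ]
      _ = T (πp x ξ) := hΨΦap _ _
  have hmem1 : ∀ (X : Set ℤ) (T : Hp →L[ℂ] Hp),
      T ∈ Set.centralizer (⇑πp '' (⇑e ⁻¹' loc X)) ↔ EC X (Phi T) := by
    intro X T
    constructor
    · intro h a ha haev
      obtain ⟨x, rfl⟩ := hevenRange a haev
      have hx : πp x ∈ ⇑πp '' (⇑e ⁻¹' loc X) := ⟨x, ha, rfl⟩
      exact hΦcommFwd x T (commute_iff_eq _ _ |>.mpr (Set.mem_centralizer_iff.mp h _ hx))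
    · intro h
      rw [Set.mem_centralizer_iff]
      rintro m ⟨x, hx, rfl⟩
      exact (hΦcommBwd x T (h (e x) hx (hΘe x))).eq
  have hmem2 : ∀ T : Hp →L[ℂ] Hp,
      T ∈ Set.centralizer (Set.centralizer (⇑πp '' (⇑e ⁻¹' loc Λ))) ↔
        (∀ T' : H →L[ℂ] H, Cor T' → EC Λ T' → Commute T' (Phi T)) := by
    intro T
    constructor
    · intro h T' hcor hec
      have hΦΨT' : Phi (Ws ∘L T' ∘L W) = T' := by
        ext ξ
        calc Phi (Ws ∘L T' ∘L W) ξ = W (Ws (T' (W (Ws ξ)))) := rfl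
          _ = P (T' (P ξ)) := by rw [hWWs, hWWs]
          _ = (P * T' * P) ξ := by simp only [ContinuousLinearMap.mul_apply]
          _ = T' ξ := by rw [show P * T' * P = T' from hcor]
      have hmemT' : (Ws ∘L T' ∘L W) ∈ Set.centralizer (⇑πp '' (⇑e ⁻¹' loc Λ)) :=
        (hmem1 Λ _).mpr (by rw [hΦΨT']; exact hec)
      have heq := Set.mem_centralizer_iff.mp h _ hmemT'
      rw [commute_iff_eq, ← hΦΨT', hΦmul, hΦmul, heq]
    · intro h
      rw [Set.mem_centralizer_iff]
      rintro S hS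
      have hecS : EC Λ (Phi S) := (hmem1 Λ S).mp hS
      have hcomm := h (Phi S) (hCorPhi S) hecS
      have h2 : Phi (S * T) = Phi (T * S) := by rw [← hΦmul, ← hΦmul, hcomm.eq]
      exact hΦinj _ _ h2
  -- the local odd unitaries
  have hbb : ∀ j : ℤ, ι j pauliX * ι j pauliX = 1 := by
    intro j; rw [← map_mul, pauliX_mul_self, map_one]
  have hΘσ : ∀ j : ℤ, Θ (ι j pauliX) = -(ι j pauliX) := by
    intro j; rw [hΘ, pauliZ_conj_pauliX, map_neg]
  have hvv : ∀ j : ℤ, π (ι j pauliX) * π (ι j pauliX) = 1 := by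
    intro j; rw [← map_mul, hbb, map_one]
  have hUπ' : ∀ a : A, π a * U = U * π (Θ a) := by
    intro a
    have h := hUπ (Θ a)
    rw [hΘΘ] at h
    exact h.symm
  have hUv : ∀ j : ℤ, U * π (ι j pauliX) = -(π (ι j pauliX) * U) := by
    intro j; rw [hUπ, hΘσ, map_neg, neg_mul]
  have hvU : ∀ j : ℤ, π (ι j pauliX) * U = -(U * π (ι j pauliX)) := by
    intro j; rw [hUv, neg_neg]
  have hπaU : ∀ a : A, Θ a = a → Commute (π a) U := by
    intro a hae
    have h := hUπ a
    rw [hae] at h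
    exact commute_iff_eq _ _ |>.mpr h.symm
  have hπaP : ∀ a : A, Θ a = a → Commute (π a) P := fun a hae =>
    commute_iff_eq _ _ |>.mpr (hPπeven a hae)
  -- EC/FC closure properties
  have hECadd : ∀ X T S, EC X T → EC X S → EC X (T + S) :=
    fun X T S h1 h2 a ha hae => (h1 a ha hae).add_right (h2 a ha hae)
  have hECsub : ∀ X T S, EC X T → EC X S → EC X (T - S) :=
    fun X T S h1 h2 a ha hae => (h1 a ha hae).sub_right (h2 a ha hae)
  have hECsmul : ∀ X (c : ℂ) T, EC X T → EC X (c • T) :=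
    fun X c T h a ha hae => (h a ha hae).smul_right c
  have hFCadd : ∀ X T S, FC X T → FC X S → FC X (T + S) :=
    fun X T S h1 h2 a ha => (h1 a ha).add_right (h2 a ha)
  have hFCsub : ∀ X T S, FC X T → FC X S → FC X (T - S) :=
    fun X T S h1 h2 a ha => (h1 a ha).sub_right (h2 a ha)
  have hFCsmul : ∀ X (c : ℂ) T, FC X T → FC X (c • T) :=
    fun X c T h a ha => (h a ha).smul_right c
  have hFCmul : ∀ X T S, FC X T → FC X S → FC X (T * S) :=
    fun X T S h1 h2 a ha => (h1 a ha).mul_right (h2 a ha)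
  have hECU : ∀ X T, EC X T → EC X (U * T * U) :=
    fun X T h a ha hae => ((hπaU a hae).mul_right (h a ha hae)).mul_right (hπaU a hae)
  have hFCU : ∀ X T, FC X T → FC X (U * T * U) := by
    intro X T h a ha
    rw [commute_iff_eq]
    have h1 : π a * U = U * π (Θ a) := hUπ' a
    have h2 : π (Θ a) * T = T * π (Θ a) := (h (Θ a) (hΘloc X a ha)).eq
    calc π a * (U * T * U) = (π a * U) * T * U := by noncomm_ring
      _ = (U * π (Θ a)) * T * U := by rw [h1]
      _ = U * (π (Θ a) * T) * U := by noncomm_ring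
      _ = U * (T * π (Θ a)) * U := by rw [h2]
      _ = (U * T) * (π (Θ a) * U) := by noncomm_ring
      _ = (U * T) * (U * π (Θ (Θ a))) := by rw [hUπ' (Θ a)]
      _ = (U * T * U) * π (Θ (Θ a)) := by noncomm_ring
      _ = (U * T * U) * π a := by rw [hΘΘ]
  have hbconjEC : ∀ (X : Set ℤ) (j : ℤ), j ∈ X → ∀ T, EC X T →
      EC X (π (ι j pauliX) * T * π (ι j pauliX)) := by
    intro X j hj T h a ha hae
    have hbab : ι j pauliX * a * ι j pauliX ∈ loc X :=
      hlocMul X _ _ (hlocMul X _ _ (hgenmem X j hj _) ha) (hgenmem X j hj _)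
    have hbabe : Θ (ι j pauliX * a * ι j pauliX) = ι j pauliX * a * ι j pauliX := by
      rw [map_mul, map_mul, hΘσ, hae, neg_mul, neg_mul_neg]
    have hc := (h _ hbab hbabe).eq
    rw [commute_iff_eq]
    have e1 : π a * π (ι j pauliX) = π (ι j pauliX) * π (ι j pauliX * a * ι j pauliX) := by
      rw [← map_mul, ← map_mul]
      congr 1
      calc a * ι j pauliX = (ι j pauliX * ι j pauliX) * (a * ι j pauliX) := by
            rw [hbb, one_mul]
        _ = ι j pauliX * (ι j pauliX * a * ι j pauliX) := by noncomm_ring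
    have e2 : π (ι j pauliX * a * ι j pauliX) * π (ι j pauliX) = π (ι j pauliX) * π a := by
      rw [← map_mul, ← map_mul]
      congr 1
      calc (ι j pauliX * a * ι j pauliX) * ι j pauliX
          = ι j pauliX * a * (ι j pauliX * ι j pauliX) := by noncomm_ring
        _ = ι j pauliX * a := by rw [hbb, mul_one]
    calc π a * (π (ι j pauliX) * T * π (ι j pauliX))
        = (π a * π (ι j pauliX)) * T * π (ι j pauliX) := by noncomm_ring
      _ = (π (ι j pauliX) * π (ι j pauliX * a * ι j pauliX)) * T * π (ι j pauliX) := by rw [e1]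
      _ = π (ι j pauliX) * (π (ι j pauliX * a * ι j pauliX) * T) * π (ι j pauliX) := by
          noncomm_ring
      _ = π (ι j pauliX) * (T * π (ι j pauliX * a * ι j pauliX)) * π (ι j pauliX) := by rw [hc]
      _ = (π (ι j pauliX) * T) * (π (ι j pauliX * a * ι j pauliX) * π (ι j pauliX)) := by
          noncomm_ring
      _ = (π (ι j pauliX) * T) * (π (ι j pauliX) * π a) := by rw [e2]
      _ = (π (ι j pauliX) * T * π (ι j pauliX)) * π a := by noncomm_ring
  -- K1 : even commutant plus one odd unitary controls the full local commutant
  have hK1 : ∀ (X : Set ℤ) (j : ℤ), j ∈ X → ∀ T, EC X T →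
      Commute (π (ι j pauliX)) T → FC X T := by
    intro X j hj T hec hv a ha
    set ap := (2⁻¹ : ℂ) • (a + Θ a) with hapdef
    set am := (2⁻¹ : ℂ) • (a - Θ a) with hamdef
    have hap : ap ∈ loc X := hlocSmul X _ _ (hlocAdd X _ _ ha (hΘloc X a ha))
    have hape : Θ ap = ap := by rw [hapdef, map_smul, map_add, hΘΘ, add_comm]
    have ham : am ∈ loc X := hlocSmul X _ _ (hlocSub X _ _ ha (hΘloc X a ha))
    have hbam : ι j pauliX * am ∈ loc X := hlocMul X _ _ (hgenmem X j hj _) ham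
    have hame : Θ am = -am := by
      rw [hamdef, map_smul, map_sub, hΘΘ, ← smul_neg, neg_sub]
    have hbame : Θ (ι j pauliX * am) = ι j pauliX * am := by
      rw [map_mul, hΘσ j, hame, neg_mul_neg]
    have hdecomp : a = ap + ι j pauliX * (ι j pauliX * am) := by
      have h2 : ι j pauliX * (ι j pauliX * am) = am := by
        rw [← mul_assoc, hbb, one_mul]
      rw [h2, hapdef, hamdef, ← smul_add]
      have h3 : a + Θ a + (a - Θ a) = (2 : ℂ) • a := by
        rw [two_smul]; abel
      rw [h3, smul_smul]
      norm_num
    rw [show a = ap + ι j pauliX * (ι j pauliX * am) from hdecomp, map_add, map_mul]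
    refine Commute.add_left (hec ap hap hape) ?_
    exact hv.mul_left (hec _ hbam hbame)
  -- irreducibility of π and of πp
  have hscal : ∀ T : H →L[ℂ] H, (∀ a : A, Commute (π a) T) → ∃ c : ℂ, T = c • 1 := by
    intro T h
    refine hpure T ?_
    rw [Set.mem_centralizer_iff]
    rintro m ⟨a, rfl⟩
    exact (h a).eq
  have hUW : ∀ ξ : Hp, U (W ξ) = W ξ := by
    intro ξ
    have hUPpt : ∀ η, U (P η) = P η := by
      intro η
      have := congrArg (fun f : H →L[ℂ] H => f η) hUP
      simpa only [ContinuousLinearMap.mul_apply] using this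
    calc U (W ξ) = U (P (W ξ)) := by rw [hPW]
      _ = P (W ξ) := hUPpt _
      _ = W ξ := hPW ξ

  -- irreducibility of the even GNS representation
  have hIRR : ∀ T : Hp →L[ℂ] Hp, (∀ x : Aev, Commute (πp x) T) → ∃ c : ℂ, T = c • 1 := by
    intro T h
    set Th := Phi T with hThdef
    have hECuT : EC Set.univ Th := by
      intro a _ hae
      obtain ⟨x, rfl⟩ := hevenRange a hae
      exact hΦcommFwd x T (h x)
    set v0 := π (ι (0 : ℤ) pauliX) with hv0def
    have hv0v0 : v0 * v0 = 1 := hvv 0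
    have hUv0 : U * v0 = -(v0 * U) := hUv 0
    have hv0U : v0 * U = -(U * v0) := hvU 0
    set Tc := (2⁻¹ : ℂ) • (Th + v0 * Th * v0) with hTcdef
    set Ta := (2⁻¹ : ℂ) • (Th - v0 * Th * v0) with hTadef
    have hconj : EC Set.univ (v0 * Th * v0) := hbconjEC Set.univ 0 (Set.mem_univ 0) Th hECuT
    have hECuTc : EC Set.univ Tc := hECsmul _ _ _ (hECadd _ _ _ hECuT hconj)
    have hECuTa : EC Set.univ Ta := hECsmul _ _ _ (hECsub _ _ _ hECuT hconj)
    have hr1 : v0 * (v0 * Th * v0) = Th * v0 := by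
      calc v0 * (v0 * Th * v0) = (v0 * v0) * Th * v0 := by noncomm_ring
        _ = Th * v0 := by rw [hv0v0, one_mul]
    have hr2 : (v0 * Th * v0) * v0 = v0 * Th := by
      calc (v0 * Th * v0) * v0 = v0 * Th * (v0 * v0) := by noncomm_ring
        _ = v0 * Th := by rw [hv0v0, mul_one]
    have hTcv0 : Commute v0 Tc := by
      refine Commute.smul_right ?_ _
      rw [commute_iff_eq]
      rw [mul_add, add_mul, hr1, hr2, add_comm]
    have hFCuTc : FC Set.univ Tc := hK1 Set.univ 0 (Set.mem_univ 0) Tc hECuTc hTcv0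
    obtain ⟨α, hα⟩ := hscal Tc fun a => hFCuTc a (by rw [hgen]; trivial)
    have hTav0 : v0 * Ta = -(Ta * v0) := by
      rw [hTadef, mul_smul_comm, smul_mul_assoc, ← smul_neg]
      congr 1
      rw [mul_sub, sub_mul, hr1, hr2, neg_sub]
    set Tb := Ta * U with hTbdef
    have hECuTb : EC Set.univ Tb := fun a ha hae => (hECuTa a ha hae).mul_right (hπaU a hae)
    have hTbv0 : Commute v0 Tb := by
      rw [commute_iff_eq]
      calc v0 * (Ta * U) = (v0 * Ta) * U := by noncomm_ring
        _ = (-(Ta * v0)) * U := by rw [hTav0]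
        _ = -(Ta * (v0 * U)) := by noncomm_ring
        _ = -(Ta * (-(U * v0))) := by rw [hv0U]
        _ = (Ta * U) * v0 := by noncomm_ring
    have hFCuTb : FC Set.univ Tb := hK1 Set.univ 0 (Set.mem_univ 0) Tb hECuTb hTbv0
    obtain ⟨β, hβ⟩ := hscal Tb fun a => hFCuTb a (by rw [hgen]; trivial)
    have hTa : Ta = β • U := by
      calc Ta = Ta * (U * U) := by rw [hUU, mul_one]
        _ = (Ta * U) * U := by noncomm_ring
        _ = (β • 1) * U := by rw [show Ta * U = β • (1 : H →L[ℂ] H) from hβ]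
        _ = β • U := by rw [smul_mul_assoc, one_mul]
    have hTh : Th = α • 1 + β • U := by
      have hsum : Tc + Ta = Th := by
        rw [hTcdef, hTadef, ← smul_add]
        have h3 : Th + v0 * Th * v0 + (Th - v0 * Th * v0) = (2 : ℂ) • Th := by
          rw [two_smul]; abel
        rw [h3, smul_smul]
        norm_num
      rw [← hsum, hα, hTa]
    refine ⟨α + β, ?_⟩
    ext ξ
    have h1 : Th (W ξ) = W (T ξ) := by
      rw [hThdef, hΦap, hWsW]
    calc T ξ = Ws (W (T ξ)) := (hWsW _).symm
      _ = Ws (Th (W ξ)) := by rw [h1]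
      _ = Ws ((α • 1 + β • U) (W ξ)) := by rw [hTh]
      _ = Ws (α • W ξ + β • U (W ξ)) := by
          simp only [ContinuousLinearMap.add_apply, ContinuousLinearMap.smul_apply,
            ContinuousLinearMap.one_apply]
      _ = Ws (α • W ξ + β • W ξ) := by rw [hUW]
      _ = Ws ((α + β) • W ξ) := by rw [← add_smul]
      _ = (α + β) • Ws (W ξ) := by rw [map_smul]
      _ = (α + β) • ξ := by rw [hWsW]
      _ = ((α + β) • (1 : Hp →L[ℂ] Hp)) ξ := by
          simp only [ContinuousLinearMap.smul_apply, ContinuousLinearMap.one_apply]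

  -- scalars
  have hπalg : ∀ c : ℂ, π (algebraMap ℂ A c) = c • (1 : H →L[ℂ] H) := by
    intro c
    rw [AlgHomClass.commutes, Algebra.algebraMap_eq_smul_one]
  have hπpalg : ∀ c : ℂ, πp (algebraMap ℂ Aev c) = c • (1 : Hp →L[ℂ] Hp) := by
    intro c
    rw [AlgHomClass.commutes, Algebra.algebraMap_eq_smul_one]
  have hsmulcomm : ∀ (c : ℂ) (T : H →L[ℂ] H), Commute (c • (1 : H →L[ℂ] H)) T := by
    intro c T
    rw [commute_iff_eq, smul_mul_assoc, one_mul, mul_smul_comm, mul_one]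
  have hsmulcommp : ∀ (c : ℂ) (T : Hp →L[ℂ] Hp), Commute (c • (1 : Hp →L[ℂ] Hp)) T := by
    intro c T
    rw [commute_iff_eq, smul_mul_assoc, one_mul, mul_smul_comm, mul_one]
  have hloc0 : ∀ a ∈ loc (∅ : Set ℤ), ∃ c : ℂ, a = algebraMap ℂ A c := by
    refine hclosure_ind ∅ (fun a => ∃ c : ℂ, a = algebraMap ℂ A c) ?_ ?_ ?_ ?_ ?_ ?_
    · have hset : {a : A | ∃ c : ℂ, a = algebraMap ℂ A c} =
          ((Submodule.span ℂ {(1 : A)} : Submodule ℂ A) : Set A) := by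
        ext a
        simp only [Set.mem_setOf_eq, SetLike.mem_coe, Submodule.mem_span_singleton]
        constructor
        · rintro ⟨c, rfl⟩
          exact ⟨c, (Algebra.algebraMap_eq_smul_one c).symm⟩
        · rintro ⟨c, rfl⟩
          exact ⟨c, (Algebra.algebraMap_eq_smul_one c).symm⟩
      rw [hset]
      exact Submodule.closed_of_finiteDimensional _
    · rintro j hj m
      exact absurd hj (Set.notMem_empty j)
    · intro c; exact ⟨c, rfl⟩
    · rintro x y ⟨c, rfl⟩ ⟨d, rfl⟩; exact ⟨c + d, (map_add _ _ _).symm⟩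
    · rintro x y ⟨c, rfl⟩ ⟨d, rfl⟩; exact ⟨c * d, (map_mul _ _ _).symm⟩
    · rintro x ⟨c, rfl⟩
      refine ⟨starRingEnd ℂ c, ?_⟩
      rw [Algebra.algebraMap_eq_smul_one, Algebra.algebraMap_eq_smul_one, star_smul, star_one,
        starRingEnd_apply]
  have hcentπ0 : Set.centralizer (⇑π '' loc (∅ : Set ℤ)) = Set.univ := by
    rw [Set.eq_univ_iff_forall]
    intro T
    rw [Set.mem_centralizer_iff]
    rintro m ⟨a, ha, rfl⟩
    obtain ⟨c, rfl⟩ := hloc0 a ha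
    rw [hπalg]
    exact (hsmulcomm c T).eq
  have hcentπp0 : Set.centralizer (⇑πp '' (⇑e ⁻¹' loc (∅ : Set ℤ))) = Set.univ := by
    rw [Set.eq_univ_iff_forall]
    intro T
    rw [Set.mem_centralizer_iff]
    rintro m ⟨x, hx, rfl⟩
    obtain ⟨c, hc⟩ := hloc0 (e x) hx
    have hxc : x = algebraMap ℂ Aev c := heinj (by rw [hc, AlgHomClass.commutes])
    rw [hxc, hπpalg]
    exact (hsmulcommp c T).eq
  -- ## case split on Λ
  rcases Set.eq_empty_or_nonempty Λ with hΛe | hΛne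
  · -- Λ = ∅ : both dualities hold
    subst hΛe
    rw [Set.compl_empty]
    have hL : Set.centralizer (Set.centralizer (⇑π '' loc (∅ : Set ℤ))) =
        Set.centralizer (⇑π '' loc Set.univ) := by
      rw [hcentπ0, hgen, Set.image_univ]
      apply Set.Subset.antisymm
      · exact Set.centralizer_subset (Set.subset_univ _)
      · intro T hT
        obtain ⟨c, rfl⟩ := hpure T hT
        rw [Set.mem_centralizer_iff]
        intro m _
        exact ((hsmulcomm c m).symm).eq
    have hR : Set.centralizer (Set.centralizer (⇑πp '' (⇑e ⁻¹' loc (∅ : Set ℤ)))) =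
        Set.centralizer (⇑πp '' (⇑e ⁻¹' loc Set.univ)) := by
      rw [hcentπp0, hgen, Set.preimage_univ, Set.image_univ]
      apply Set.Subset.antisymm
      · exact Set.centralizer_subset (Set.subset_univ _)
      · intro T hT
        have hcom : ∀ x : Aev, Commute (πp x) T := fun x =>
          commute_iff_eq _ _ |>.mpr (Set.mem_centralizer_iff.mp hT _ (Set.mem_range_self x))
        obtain ⟨c, rfl⟩ := hIRR T hcom
        rw [Set.mem_centralizer_iff]
        intro m _
        exact ((hsmulcommp c m).symm).eq
    exact iff_of_true hL hR
  rcases Set.eq_empty_or_nonempty Λᶜ with hΛce | hΛcne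
  · -- Λ = univ : both dualities hold
    have hΛu : Λ = Set.univ := by rwa [Set.compl_empty_iff] at hΛce
    subst hΛu
    rw [Set.compl_univ]
    have hL : Set.centralizer (Set.centralizer (⇑π '' loc Set.univ)) =
        Set.centralizer (⇑π '' loc (∅ : Set ℤ)) := by
      rw [hcentπ0, hgen, Set.image_univ, Set.eq_univ_iff_forall]
      intro T
      rw [Set.mem_centralizer_iff]
      intro m hm
      obtain ⟨c, rfl⟩ := hpure m hm
      exact (hsmulcomm c T).eq
    have hR : Set.centralizer (Set.centralizer (⇑πp '' (⇑e ⁻¹' loc Set.univ))) =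
        Set.centralizer (⇑πp '' (⇑e ⁻¹' loc (∅ : Set ℤ))) := by
      rw [hcentπp0, hgen, Set.preimage_univ, Set.image_univ, Set.eq_univ_iff_forall]
      intro T
      rw [Set.mem_centralizer_iff]
      intro m hm
      have hcom : ∀ x : Aev, Commute (πp x) m := fun x =>
        commute_iff_eq _ _ |>.mpr (Set.mem_centralizer_iff.mp hm _ (Set.mem_range_self x))
      obtain ⟨c, rfl⟩ := hIRR m hcom
      exact (hsmulcommp c T).eq
    exact iff_of_true hL hR
  · -- main case : Λ and Λᶜ both nonempty
    obtain ⟨j₀, hj₀⟩ := hΛne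
    obtain ⟨j₁, hj₁⟩ := hΛcne

    set v : H →L[ℂ] H := π (ι j₀ pauliX) with hvdef
    set v' : H →L[ℂ] H := π (ι j₁ pauliX) with hv'def
    have hvmem : ι j₀ pauliX ∈ loc Λ := hgenmem Λ j₀ hj₀ _
    have hv'mem : ι j₁ pauliX ∈ loc Λᶜ := hgenmem Λᶜ j₁ hj₁ _
    have hFCv' : FC Λ v' := fun a ha =>
      (hcomm2 Λ Λᶜ (fun j hj => hj) a ha _ hv'mem).map π
    have hFCv : FC Λᶜ v := fun a ha =>
      ((hcomm2 Λ Λᶜ (fun j hj => hj) _ hvmem a ha).map π).symm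
    have hCorFacts : ∀ S : H →L[ℂ] H, Cor S →
        (P * S = S ∧ S * P = S ∧ U * S = S ∧ S * U = S) := by
      intro S hSc
      have hSc' : P * S * P = S := hSc
      have hPS : P * S = S := by
        have h1 : P * (P * S * P) = P * S * P := by
          calc P * (P * S * P) = (P * P) * S * P := by noncomm_ring
            _ = P * S * P := by rw [hPP]
        calc P * S = P * (P * S * P) := by rw [hSc']
          _ = P * S * P := h1
          _ = S := hSc'
      have hSP : S * P = S := by
        have h1 : (P * S * P) * P = P * S * P := by
          calc (P * S * P) * P = P * S * (P * P) := by noncomm_ring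
            _ = P * S * P := by rw [hPP]
        calc S * P = (P * S * P) * P := by rw [hSc']
          _ = P * S * P := h1
          _ = S := hSc'
      refine ⟨hPS, hSP, ?_, ?_⟩
      · calc U * S = U * (P * S) := by rw [hPS]
          _ = (U * P) * S := by noncomm_ring
          _ = P * S := by rw [hUP]
          _ = S := hPS
      · calc S * U = (S * P) * U := by rw [hSP]
          _ = S * (P * U) := by noncomm_ring
          _ = S * P := by rw [hPU]
          _ = S := hSP
    -- parity of the symmetrized/antisymmetrized parts
    have hpar : ∀ R : H →L[ℂ] H,
        U * ((2⁻¹ : ℂ) • (R + U * R * U)) = ((2⁻¹ : ℂ) • (R + U * R * U)) * U ∧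
        U * ((2⁻¹ : ℂ) • (R - U * R * U)) = -(((2⁻¹ : ℂ) • (R - U * R * U)) * U) := by
      intro R
      have h1 : U * (U * R * U) = R * U := by
        calc U * (U * R * U) = (U * U) * R * U := by noncomm_ring
          _ = R * U := by rw [hUU, one_mul]
      have h2 : (U * R * U) * U = U * R := by
        calc (U * R * U) * U = U * R * (U * U) := by noncomm_ring
          _ = U * R := by rw [hUU, mul_one]
      constructor
      · rw [mul_smul_comm, smul_mul_assoc]
        congr 1
        rw [mul_add, add_mul, h1, h2, add_comm]
      · rw [mul_smul_comm, smul_mul_assoc, ← smul_neg]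
        congr 1
        rw [mul_sub, sub_mul, h1, h2, neg_sub]
    have hhalfV : ∀ R V : H →L[ℂ] H,
        (2⁻¹ : ℂ) • (R + V * R * V) + (2⁻¹ : ℂ) • (R - V * R * V) = R := by
      intro R V
      rw [← smul_add]
      have h3 : R + V * R * V + (R - V * R * V) = (2 : ℂ) • R := by rw [two_smul]; abel
      rw [h3, smul_smul]
      norm_num
    have hPcommOf : ∀ S : H →L[ℂ] H, U * S = S * U → P * S = S * P := by
      intro S hSU
      rw [hPdef, smul_mul_assoc, mul_smul_comm]
      congr 1
      rw [add_mul, mul_add, one_mul, mul_one, hSU]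
    -- (i) duality on H ↔ Dmain
    have hi1 : (Set.centralizer (Set.centralizer (⇑π '' loc Λ)) =
        Set.centralizer (⇑π '' loc Λᶜ)) →
        ∀ T, FC Λᶜ T → ∀ T', FC Λ T' → Commute T' T := by
      intro h T hT T' hT'
      have hTmem : T ∈ Set.centralizer (⇑π '' loc Λᶜ) := by
        rw [Set.mem_centralizer_iff]
        rintro m ⟨a, ha, rfl⟩
        exact (hT a ha).eq
      rw [← h] at hTmem
      have hT'mem : T' ∈ Set.centralizer (⇑π '' loc Λ) := by
        rw [Set.mem_centralizer_iff]
        rintro m ⟨a, ha, rfl⟩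
        exact (hT' a ha).eq
      exact commute_iff_eq _ _ |>.mpr (Set.mem_centralizer_iff.mp hTmem _ hT'mem)
    have hi2 : (∀ T, FC Λᶜ T → ∀ T', FC Λ T' → Commute T' T) →
        Set.centralizer (Set.centralizer (⇑π '' loc Λ)) =
          Set.centralizer (⇑π '' loc Λᶜ) := by
      intro hD
      apply Set.Subset.antisymm
      · intro T hT
        rw [Set.mem_centralizer_iff]
        rintro m ⟨a, ha, rfl⟩
        have hmem : π a ∈ Set.centralizer (⇑π '' loc Λ) := by
          rw [Set.mem_centralizer_iff]
          rintro m' ⟨a', ha', rfl⟩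
          exact ((hcomm2 Λ Λᶜ (fun j hj => hj) a' ha' a ha).map π).eq
        exact Set.mem_centralizer_iff.mp hT _ hmem
      · intro T hT
        have hFT : FC Λᶜ T := fun a ha =>
          commute_iff_eq _ _ |>.mpr (Set.mem_centralizer_iff.mp hT _ ⟨a, ha, rfl⟩)
        rw [Set.mem_centralizer_iff]
        intro T' hT'
        have hFT' : FC Λ T' := fun a ha =>
          commute_iff_eq _ _ |>.mpr (Set.mem_centralizer_iff.mp hT' _ ⟨a, ha, rfl⟩)
        exact (hD T hFT T' hFT').eq
    -- (ii) duality on Hp ↔ Dplus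
    have hii1 : (Set.centralizer (Set.centralizer (⇑πp '' (⇑e ⁻¹' loc Λ))) =
        Set.centralizer (⇑πp '' (⇑e ⁻¹' loc Λᶜ))) →
        ∀ T, Cor T → EC Λᶜ T → ∀ T', Cor T' → EC Λ T' → Commute T' T := by
      intro h T hTc hTe T' hT'c hT'e
      have hΦS : Phi (Ws ∘L T ∘L W) = T := by
        ext ξ
        calc Phi (Ws ∘L T ∘L W) ξ = W (Ws (T (W (Ws ξ)))) := rfl
          _ = P (T (P ξ)) := by rw [hWWs, hWWs]
          _ = (P * T * P) ξ := by simp only [ContinuousLinearMap.mul_apply]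
          _ = T ξ := by rw [show P * T * P = T from hTc]
      have hSmem : (Ws ∘L T ∘L W) ∈ Set.centralizer (⇑πp '' (⇑e ⁻¹' loc Λᶜ)) :=
        (hmem1 Λᶜ _).mpr (by rw [hΦS]; exact hTe)
      rw [← h] at hSmem
      have hfin := (hmem2 _).mp hSmem T' hT'c hT'e
      rwa [hΦS] at hfin
    have hii2 : (∀ T, Cor T → EC Λᶜ T → ∀ T', Cor T' → EC Λ T' → Commute T' T) →
        Set.centralizer (Set.centralizer (⇑πp '' (⇑e ⁻¹' loc Λ))) =
          Set.centralizer (⇑πp '' (⇑e ⁻¹' loc Λᶜ)) := by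
      intro hD
      apply Set.Subset.antisymm
      · intro S hS
        rw [Set.mem_centralizer_iff]
        rintro m ⟨x, hx, rfl⟩
        have hmem : πp x ∈ Set.centralizer (⇑πp '' (⇑e ⁻¹' loc Λ)) := by
          rw [Set.mem_centralizer_iff]
          rintro m' ⟨y, hy, rfl⟩
          rw [← map_mul, ← map_mul]
          congr 1
          apply heinj
          rw [map_mul, map_mul]
          exact (hcomm2 Λ Λᶜ (fun j hj => hj) (e y) hy (e x) hx).eq
        exact Set.mem_centralizer_iff.mp hS _ hmem
      · intro S hS
        have hecS : EC Λᶜ (Phi S) := (hmem1 Λᶜ S).mp hS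
        exact (hmem2 S).mpr fun T' hc he => hD (Phi S) (hCorPhi S) hecS T' hc he
    -- (iii) Dmain → Dplus
    have hiii : (∀ T, FC Λᶜ T → ∀ T', FC Λ T' → Commute T' T) →
        ∀ T, Cor T → EC Λᶜ T → ∀ T', Cor T' → EC Λ T' → Commute T' T := by
      intro hD T hTc hTe T' hT'c hT'e
      obtain ⟨hPT, hTP, hUT, hTU⟩ := hCorFacts T hTc
      obtain ⟨hPT', hT'P, hUT', hT'U⟩ := hCorFacts T' hT'c
      have hr1 : v' * (v' * T * v') = T * v' := by
        calc v' * (v' * T * v') = (v' * v') * T * v' := by noncomm_ring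
          _ = T * v' := by rw [hvv j₁, one_mul]
      have hr2 : (v' * T * v') * v' = v' * T := by
        calc (v' * T * v') * v' = v' * T * (v' * v') := by noncomm_ring
          _ = v' * T := by rw [hvv j₁, mul_one]
      have hT1e : EC Λᶜ ((2⁻¹ : ℂ) • (T + v' * T * v')) :=
        hECsmul _ _ _ (hECadd _ _ _ hTe (hbconjEC Λᶜ j₁ hj₁ T hTe))
      have hT2e : EC Λᶜ ((2⁻¹ : ℂ) • (T - v' * T * v')) :=
        hECsmul _ _ _ (hECsub _ _ _ hTe (hbconjEC Λᶜ j₁ hj₁ T hTe))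
      have hT1v : Commute v' ((2⁻¹ : ℂ) • (T + v' * T * v')) := by
        refine Commute.smul_right ?_ _
        rw [commute_iff_eq, mul_add, add_mul, hr1, hr2, add_comm]
      have hF1 : FC Λᶜ ((2⁻¹ : ℂ) • (T + v' * T * v')) := hK1 Λᶜ j₁ hj₁ _ hT1e hT1v
      have hT2v : v' * ((2⁻¹ : ℂ) • (T - v' * T * v')) =
          -(((2⁻¹ : ℂ) • (T - v' * T * v')) * v') := by
        rw [mul_smul_comm, smul_mul_assoc, ← smul_neg]
        congr 1
        rw [mul_sub, sub_mul, hr1, hr2, neg_sub]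
      have hwe : EC Λᶜ (((2⁻¹ : ℂ) • (T - v' * T * v')) * U) := fun a ha hae =>
        (hT2e a ha hae).mul_right (hπaU a hae)
      have hwv : Commute v' (((2⁻¹ : ℂ) • (T - v' * T * v')) * U) := by
        rw [commute_iff_eq]
        calc v' * (((2⁻¹ : ℂ) • (T - v' * T * v')) * U)
            = (v' * ((2⁻¹ : ℂ) • (T - v' * T * v'))) * U := by noncomm_ring
          _ = (-(((2⁻¹ : ℂ) • (T - v' * T * v')) * v')) * U := by rw [hT2v]
          _ = -(((2⁻¹ : ℂ) • (T - v' * T * v')) * (v' * U)) := by noncomm_ring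
          _ = -(((2⁻¹ : ℂ) • (T - v' * T * v')) * (-(U * v'))) := by rw [hvU j₁]
          _ = (((2⁻¹ : ℂ) • (T - v' * T * v')) * U) * v' := by noncomm_ring
      have hFw : FC Λᶜ (((2⁻¹ : ℂ) • (T - v' * T * v')) * U) := hK1 Λᶜ j₁ hj₁ _ hwe hwv
      have hUvTv1 : U * (v' * T * v') = -(v' * T * v') := by
        calc U * (v' * T * v') = (U * v') * (T * v') := by noncomm_ring
          _ = (-(v' * U)) * (T * v') := by rw [hUv j₁]
          _ = -(v' * (U * T) * v') := by noncomm_ring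
          _ = -(v' * T * v') := by rw [hUT]
      have hUvTv2 : (v' * T * v') * U = -(v' * T * v') := by
        calc (v' * T * v') * U = v' * T * (v' * U) := by noncomm_ring
          _ = v' * T * (-(U * v')) := by rw [hvU j₁]
          _ = -(v' * (T * U) * v') := by noncomm_ring
          _ = -(v' * T * v') := by rw [hTU]
      have hUT1 : U * ((2⁻¹ : ℂ) • (T + v' * T * v')) =
          ((2⁻¹ : ℂ) • (T + v' * T * v')) * U := by
        rw [mul_smul_comm, smul_mul_assoc]
        congr 1
        rw [mul_add, add_mul, hUT, hTU, hUvTv1, hUvTv2]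
      have hUw : U * (((2⁻¹ : ℂ) • (T - v' * T * v')) * U) =
          (((2⁻¹ : ℂ) • (T - v' * T * v')) * U) * U := by
        have h3 : U * ((2⁻¹ : ℂ) • (T - v' * T * v')) * U = (2⁻¹ : ℂ) • (T - v' * T * v') := by
          rw [mul_smul_comm, smul_mul_assoc]
          congr 1
          rw [mul_sub, sub_mul]
          rw [show U * T * U = T from by rw [hUT, hTU]]
          rw [show U * (v' * T * v') * U = v' * T * v' from by
            calc U * (v' * T * v') * U = (U * (v' * T * v')) * U := by noncomm_ring
              _ = (-(v' * T * v')) * U := by rw [hUvTv1]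
              _ = -((v' * T * v') * U) := by noncomm_ring
              _ = v' * T * v' := by rw [hUvTv2, neg_neg]]
        have h4 : U * (((2⁻¹ : ℂ) • (T - v' * T * v')) * U) =
            (2⁻¹ : ℂ) • (T - v' * T * v') := by
          rw [← mul_assoc, h3]
        have h5 : (((2⁻¹ : ℂ) • (T - v' * T * v')) * U) * U =
            (2⁻¹ : ℂ) • (T - v' * T * v') := by
          rw [mul_assoc, hUU, mul_one]
        rw [h4, h5]
      -- corner decomposition of T
      have hTsum : T = P * ((2⁻¹ : ℂ) • (T + v' * T * v')) * P +
          P * (((2⁻¹ : ℂ) • (T - v' * T * v')) * U) * P := by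
        have hPT2P : P * ((2⁻¹ : ℂ) • (T - v' * T * v')) * P =
            P * (((2⁻¹ : ℂ) • (T - v' * T * v')) * U) * P := by
          have hz : (((2⁻¹ : ℂ) • (T - v' * T * v')) * U) * P =
              ((2⁻¹ : ℂ) • (T - v' * T * v')) * P := by
            rw [mul_assoc, hUP]
          calc P * ((2⁻¹ : ℂ) • (T - v' * T * v')) * P
              = P * (((2⁻¹ : ℂ) • (T - v' * T * v')) * P) := by noncomm_ring
            _ = P * ((((2⁻¹ : ℂ) • (T - v' * T * v')) * U) * P) := by rw [hz]
            _ = P * (((2⁻¹ : ℂ) • (T - v' * T * v')) * U) * P := by noncomm_ring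
        calc T = P * T * P := hTc.symm
          _ = P * ((2⁻¹ : ℂ) • (T + v' * T * v') + (2⁻¹ : ℂ) • (T - v' * T * v')) * P := by
              rw [hhalfV T v']
          _ = P * ((2⁻¹ : ℂ) • (T + v' * T * v')) * P +
              P * ((2⁻¹ : ℂ) • (T - v' * T * v')) * P := by noncomm_ring
          _ = _ := by rw [hPT2P]
      -- the corner-commutation claim
      have hCC : ∀ w0 : H →L[ℂ] H, (∀ z, FC Λ z → Commute z w0) → U * w0 = w0 * U →
          Commute T' (P * w0 * P) := by
        intro w0 hw0 hUw0
        have hPw0 : P * w0 = w0 * P := hPcommOf w0 hUw0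
        have hr1' : v * (v * T' * v) = T' * v := by
          calc v * (v * T' * v) = (v * v) * T' * v := by noncomm_ring
            _ = T' * v := by rw [hvv j₀, one_mul]
        have hr2' : (v * T' * v) * v = v * T' := by
          calc (v * T' * v) * v = v * T' * (v * v) := by noncomm_ring
            _ = v * T' := by rw [hvv j₀, mul_one]
        have hyce : EC Λ ((2⁻¹ : ℂ) • (T' + v * T' * v)) :=
          hECsmul _ _ _ (hECadd _ _ _ hT'e (hbconjEC Λ j₀ hj₀ T' hT'e))
        have hyae : EC Λ ((2⁻¹ : ℂ) • (T' - v * T' * v)) :=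
          hECsmul _ _ _ (hECsub _ _ _ hT'e (hbconjEC Λ j₀ hj₀ T' hT'e))
        have hycv : Commute v ((2⁻¹ : ℂ) • (T' + v * T' * v)) := by
          refine Commute.smul_right ?_ _
          rw [commute_iff_eq, mul_add, add_mul, hr1', hr2', add_comm]
        have hFyc : FC Λ ((2⁻¹ : ℂ) • (T' + v * T' * v)) := hK1 Λ j₀ hj₀ _ hyce hycv
        have hyav : v * ((2⁻¹ : ℂ) • (T' - v * T' * v)) =
            -(((2⁻¹ : ℂ) • (T' - v * T' * v)) * v) := by
          rw [mul_smul_comm, smul_mul_assoc, ← smul_neg]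
          congr 1
          rw [mul_sub, sub_mul, hr1', hr2', neg_sub]
        have hze : EC Λ (((2⁻¹ : ℂ) • (T' - v * T' * v)) * U) := fun a ha hae =>
          (hyae a ha hae).mul_right (hπaU a hae)
        have hzv : Commute v (((2⁻¹ : ℂ) • (T' - v * T' * v)) * U) := by
          rw [commute_iff_eq]
          calc v * (((2⁻¹ : ℂ) • (T' - v * T' * v)) * U)
              = (v * ((2⁻¹ : ℂ) • (T' - v * T' * v))) * U := by noncomm_ring
            _ = (-(((2⁻¹ : ℂ) • (T' - v * T' * v)) * v)) * U := by rw [hyav]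
            _ = -(((2⁻¹ : ℂ) • (T' - v * T' * v)) * (v * U)) := by noncomm_ring
            _ = -(((2⁻¹ : ℂ) • (T' - v * T' * v)) * (-(U * v))) := by rw [hvU j₀]
            _ = (((2⁻¹ : ℂ) • (T' - v * T' * v)) * U) * v := by noncomm_ring
        have hFz : FC Λ (((2⁻¹ : ℂ) • (T' - v * T' * v)) * U) := hK1 Λ j₀ hj₀ _ hze hzv
        have hUvT'v1 : U * (v * T' * v) = -(v * T' * v) := by
          calc U * (v * T' * v) = (U * v) * (T' * v) := by noncomm_ring
            _ = (-(v * U)) * (T' * v) := by rw [hUv j₀]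
            _ = -(v * (U * T') * v) := by noncomm_ring
            _ = -(v * T' * v) := by rw [hUT']
        have hUvT'v2 : (v * T' * v) * U = -(v * T' * v) := by
          calc (v * T' * v) * U = v * T' * (v * U) := by noncomm_ring
            _ = v * T' * (-(U * v)) := by rw [hvU j₀]
            _ = -(v * (T' * U) * v) := by noncomm_ring
            _ = -(v * T' * v) := by rw [hT'U]
        have hUyc : U * ((2⁻¹ : ℂ) • (T' + v * T' * v)) =
            ((2⁻¹ : ℂ) • (T' + v * T' * v)) * U := by
          rw [mul_smul_comm, smul_mul_assoc]
          congr 1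
          rw [mul_add, add_mul, hUT', hT'U, hUvT'v1, hUvT'v2]
        have hUz : U * (((2⁻¹ : ℂ) • (T' - v * T' * v)) * U) =
            (((2⁻¹ : ℂ) • (T' - v * T' * v)) * U) * U := by
          have h3 : U * ((2⁻¹ : ℂ) • (T' - v * T' * v)) * U =
              (2⁻¹ : ℂ) • (T' - v * T' * v) := by
            rw [mul_smul_comm, smul_mul_assoc]
            congr 1
            rw [mul_sub, sub_mul]
            rw [show U * T' * U = T' from by rw [hUT', hT'U]]
            rw [show U * (v * T' * v) * U = v * T' * v from by
              calc U * (v * T' * v) * U = (U * (v * T' * v)) * U := by noncomm_ring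
                _ = (-(v * T' * v)) * U := by rw [hUvT'v1]
                _ = -((v * T' * v) * U) := by noncomm_ring
                _ = v * T' * v := by rw [hUvT'v2, neg_neg]]
          have h4 : U * (((2⁻¹ : ℂ) • (T' - v * T' * v)) * U) =
              (2⁻¹ : ℂ) • (T' - v * T' * v) := by rw [← mul_assoc, h3]
          have h5 : (((2⁻¹ : ℂ) • (T' - v * T' * v)) * U) * U =
              (2⁻¹ : ℂ) • (T' - v * T' * v) := by rw [mul_assoc, hUU, mul_one]
          rw [h4, h5]
        have hPyc : P * ((2⁻¹ : ℂ) • (T' + v * T' * v)) =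
            ((2⁻¹ : ℂ) • (T' + v * T' * v)) * P := hPcommOf _ hUyc
        have hPz : P * (((2⁻¹ : ℂ) • (T' - v * T' * v)) * U) =
            (((2⁻¹ : ℂ) • (T' - v * T' * v)) * U) * P := hPcommOf _ hUz
        have hT'sum : T' = P * ((2⁻¹ : ℂ) • (T' + v * T' * v)) * P +
            P * (((2⁻¹ : ℂ) • (T' - v * T' * v)) * U) * P := by
          have hPyaP : P * ((2⁻¹ : ℂ) • (T' - v * T' * v)) * P =
              P * (((2⁻¹ : ℂ) • (T' - v * T' * v)) * U) * P := by
            have hz2 : (((2⁻¹ : ℂ) • (T' - v * T' * v)) * U) * P =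
                ((2⁻¹ : ℂ) • (T' - v * T' * v)) * P := by
              rw [mul_assoc, hUP]
            calc P * ((2⁻¹ : ℂ) • (T' - v * T' * v)) * P
                = P * (((2⁻¹ : ℂ) • (T' - v * T' * v)) * P) := by noncomm_ring
              _ = P * ((((2⁻¹ : ℂ) • (T' - v * T' * v)) * U) * P) := by rw [hz2]
              _ = P * (((2⁻¹ : ℂ) • (T' - v * T' * v)) * U) * P := by noncomm_ring
          calc T' = P * T' * P := hT'c.symm
            _ = P * ((2⁻¹ : ℂ) • (T' + v * T' * v) + (2⁻¹ : ℂ) • (T' - v * T' * v)) * P := by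
                rw [hhalfV T' v]
            _ = P * ((2⁻¹ : ℂ) • (T' + v * T' * v)) * P +
                P * ((2⁻¹ : ℂ) • (T' - v * T' * v)) * P := by noncomm_ring
            _ = _ := by rw [hPyaP]
        have hcorner : ∀ y0 : H →L[ℂ] H, Commute y0 w0 → P * y0 = y0 * P →
            Commute (P * y0 * P) (P * w0 * P) := by
          intro y0 hcy hPy0
          have e1 : P * y0 * P = y0 * P := by
            calc P * y0 * P = (y0 * P) * P := by rw [hPy0]
              _ = y0 * (P * P) := by noncomm_ring
              _ = y0 * P := by rw [hPP]
          have e2 : P * w0 * P = w0 * P := by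
            calc P * w0 * P = (w0 * P) * P := by rw [hPw0]
              _ = w0 * (P * P) := by noncomm_ring
              _ = w0 * P := by rw [hPP]
          have eL : (y0 * P) * (w0 * P) = (y0 * w0) * P := by
            calc (y0 * P) * (w0 * P) = y0 * (P * w0) * P := by noncomm_ring
              _ = y0 * (w0 * P) * P := by rw [hPw0]
              _ = (y0 * w0) * (P * P) := by noncomm_ring
              _ = (y0 * w0) * P := by rw [hPP]
          have eR : (w0 * P) * (y0 * P) = (w0 * y0) * P := by
            calc (w0 * P) * (y0 * P) = w0 * (P * y0) * P := by noncomm_ring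
              _ = w0 * (y0 * P) * P := by rw [hPy0]
              _ = (w0 * y0) * (P * P) := by noncomm_ring
              _ = (w0 * y0) * P := by rw [hPP]
          rw [commute_iff_eq, e1, e2, eL, eR, hcy.eq]
        have hc1 : Commute (P * ((2⁻¹ : ℂ) • (T' + v * T' * v)) * P) (P * w0 * P) :=
          hcorner _ (hw0 _ hFyc) hPyc
        have hc2 : Commute (P * (((2⁻¹ : ℂ) • (T' - v * T' * v)) * U) * P) (P * w0 * P) :=
          hcorner _ (hw0 _ hFz) hPz
        rw [show T' = P * ((2⁻¹ : ℂ) • (T' + v * T' * v)) * P +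
            P * (((2⁻¹ : ℂ) • (T' - v * T' * v)) * U) * P from hT'sum]
        exact hc1.add_left hc2
      have hcT1 : Commute T' (P * ((2⁻¹ : ℂ) • (T + v' * T * v')) * P) :=
        hCC _ (fun z hz => hD _ hF1 z hz) hUT1
      have hcw : Commute T' (P * (((2⁻¹ : ℂ) • (T - v' * T * v')) * U) * P) :=
        hCC _ (fun z hz => hD _ hFw z hz) hUw
      rw [show T = P * ((2⁻¹ : ℂ) • (T + v' * T * v')) * P +
          P * (((2⁻¹ : ℂ) • (T - v' * T * v')) * U) * P from hTsum]
      exact hcT1.add_right hcw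
    -- (iv) Dplus → Dmain
    have hiv : (∀ T, Cor T → EC Λᶜ T → ∀ T', Cor T' → EC Λ T' → Commute T' T) →
        ∀ T, FC Λᶜ T → ∀ T', FC Λ T' → Commute T' T := by
      intro hD
      have hA : ∀ S z : H →L[ℂ] H, EC Λᶜ S → EC Λ z →
          Commute (P * z * P) (P * S * P) := by
        intro S z hS hz
        have hCorPSP : Cor (P * S * P) := by
          show P * (P * S * P) * P = P * S * P
          calc P * (P * S * P) * P = (P * P) * S * (P * P) := by noncomm_ring
            _ = P * S * P := by rw [hPP]
        have hCorPzP : Cor (P * z * P) := by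
          show P * (P * z * P) * P = P * z * P
          calc P * (P * z * P) * P = (P * P) * z * (P * P) := by noncomm_ring
            _ = P * z * P := by rw [hPP]
        have hES : EC Λᶜ (P * S * P) := fun a ha hae =>
          ((hπaP a hae).mul_right (hS a ha hae)).mul_right (hπaP a hae)
        have hEz : EC Λ (P * z * P) := fun a ha hae =>
          ((hπaP a hae).mul_right (hz a ha hae)).mul_right (hπaP a hae)
        exact hD (P * S * P) hCorPSP hES (P * z * P) hCorPzP hEz
      have hvPv : v * P * v = 1 - P := by
        have hvUv : v * U * v = -U := by
          calc v * U * v = (-(U * v)) * v := by rw [hvU j₀]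
            _ = -(U * (v * v)) := by noncomm_ring
            _ = -U := by rw [hvv j₀, mul_one]
        have h1 : v * (1 + U) * v = 1 - U := by
          calc v * (1 + U) * v = v * v + v * U * v := by noncomm_ring
            _ = 1 + -U := by rw [hvv j₀, hvUv]
            _ = 1 - U := by rw [← sub_eq_add_neg]
        rw [hPdef, mul_smul_comm, smul_mul_assoc, h1]
        module
      have hE1 : ∀ S z : H →L[ℂ] H, EC Λᶜ S → U * S = S * U → FC Λ z → U * z = z * U →
          Commute z S := by
        intro S z hSe hSU hzF hzU
        have hPS : P * S = S * P := hPcommOf S hSU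
        have hPz : P * z = z * P := hPcommOf z hzU
        have hzE : EC Λ z := fun a ha _ => hzF a ha
        have hcornId : ∀ S0, EC Λᶜ S0 → P * S0 = S0 * P → z * S0 * P = S0 * z * P := by
          intro S0 hS0e hPS0
          have h := (hA S0 z hS0e hzE).eq
          have e1 : P * z * P = z * P := by
            calc P * z * P = (z * P) * P := by rw [hPz]
              _ = z * (P * P) := by noncomm_ring
              _ = z * P := by rw [hPP]
          have e2 : P * S0 * P = S0 * P := by
            calc P * S0 * P = (S0 * P) * P := by rw [hPS0]
              _ = S0 * (P * P) := by noncomm_ring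
              _ = S0 * P := by rw [hPP]
          rw [e1, e2] at h
          have eL : (z * P) * (S0 * P) = (z * S0) * P := by
            calc (z * P) * (S0 * P) = z * (P * S0) * P := by noncomm_ring
              _ = z * (S0 * P) * P := by rw [hPS0]
              _ = (z * S0) * (P * P) := by noncomm_ring
              _ = (z * S0) * P := by rw [hPP]
          have eR : (S0 * P) * (z * P) = (S0 * z) * P := by
            calc (S0 * P) * (z * P) = S0 * (P * z) * P := by noncomm_ring
              _ = S0 * (z * P) * P := by rw [hPz]
              _ = (S0 * z) * (P * P) := by noncomm_ring
              _ = (S0 * z) * P := by rw [hPP]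
          rw [eL, eR] at h
          exact h
        have h1 : z * S * P = S * z * P := hcornId S hSe hPS
        have hSt : EC Λᶜ (v * S * v) := by
          intro a ha hae
          have hva : Commute (π a) v := hFCv a ha
          exact (hva.mul_right (hSe a ha hae)).mul_right hva
        have hStU : U * (v * S * v) = (v * S * v) * U := by
          have hL : U * (v * S * v) = -(v * (S * U) * v) := by
            calc U * (v * S * v) = (U * v) * S * v := by noncomm_ring
              _ = (-(v * U)) * S * v := by rw [hUv j₀]
              _ = -(v * (U * S) * v) := by noncomm_ring
              _ = -(v * (S * U) * v) := by rw [hSU]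
          have hR : (v * S * v) * U = -(v * (S * U) * v) := by
            calc (v * S * v) * U = v * S * (v * U) := by noncomm_ring
              _ = v * S * (-(U * v)) := by rw [hvU j₀]
              _ = -(v * (S * U) * v) := by noncomm_ring
          rw [hL, hR]
        have hPSt : P * (v * S * v) = (v * S * v) * P := hPcommOf _ hStU
        have h2 : z * (v * S * v) * P = (v * S * v) * z * P := hcornId (v * S * v) hSt hPSt
        have hzv : Commute v z := hzF _ hvmem
        have hSv : S * v = v * (v * S * v) := by
          calc S * v = (v * v) * S * v := by rw [hvv j₀, one_mul]
            _ = v * (v * S * v) := by noncomm_ring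
        have hSzQ : S * z * (1 - P) = z * S * (1 - P) := by
          calc S * z * (1 - P) = S * z * (v * P * v) := by rw [hvPv]
            _ = S * (z * v) * P * v := by noncomm_ring
            _ = S * (v * z) * P * v := by rw [← hzv.eq]
            _ = (S * v) * (z * P) * v := by noncomm_ring
            _ = (v * (v * S * v)) * (z * P) * v := by rw [hSv]
            _ = v * ((v * S * v) * z * P) * v := by noncomm_ring
            _ = v * (z * (v * S * v) * P) * v := by rw [← h2]
            _ = (v * z) * ((v * S * v) * P) * v := by noncomm_ring
            _ = (z * v) * ((v * S * v) * P) * v := by rw [hzv.eq]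
            _ = z * (v * (v * S * v)) * P * v := by noncomm_ring
            _ = z * (S * v) * P * v := by rw [← hSv]
            _ = z * S * (v * P * v) := by noncomm_ring
            _ = z * S * (1 - P) := by rw [hvPv]
        rw [commute_iff_eq]
        have hfin1 : z * S * P + z * S * (1 - P) = z * S := by
          rw [mul_sub, mul_one]; abel
        have hfin2 : S * z * P + S * z * (1 - P) = S * z := by
          rw [mul_sub, mul_one]; abel
        calc z * S = z * S * P + z * S * (1 - P) := hfin1.symm
          _ = S * z * P + S * z * (1 - P) := by rw [h1, hSzQ]
          _ = S * z := hfin2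
      have hE2 : ∀ S z : H →L[ℂ] H, EC Λᶜ S → U * S = S * U → Commute v' S → FC Λ z →
          U * z = -(z * U) → Commute z S := by
        intro S z hSe hSU hSv' hzF hzU
        have hzv'F : FC Λ (z * v') := hFCmul Λ z v' hzF hFCv'
        have hzv'U : U * (z * v') = (z * v') * U := by
          calc U * (z * v') = (U * z) * v' := by noncomm_ring
            _ = (-(z * U)) * v' := by rw [hzU]
            _ = -(z * (U * v')) := by noncomm_ring
            _ = -(z * (-(v' * U))) := by rw [hUv j₁]
            _ = (z * v') * U := by noncomm_ring
        have h1 := hE1 S (z * v') hSe hSU hzv'F hzv'U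
        have h2 : z * S * v' = S * z * v' := by
          have ha : (z * v') * S = z * S * v' := by
            calc (z * v') * S = z * (v' * S) := by noncomm_ring
              _ = z * (S * v') := by rw [hSv'.eq]
              _ = z * S * v' := by noncomm_ring
          have hb : S * (z * v') = S * z * v' := by noncomm_ring
          rw [← ha, ← hb, h1.eq]
        have hc1 : z * S * v' * v' = z * S := by
          calc z * S * v' * v' = (z * S) * (v' * v') := by noncomm_ring
            _ = z * S := by rw [hvv j₁, mul_one]
        have hc2 : S * z * v' * v' = S * z := by
          calc S * z * v' * v' = (S * z) * (v' * v') := by noncomm_ring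
            _ = S * z := by rw [hvv j₁, mul_one]
        rw [commute_iff_eq]
        calc z * S = z * S * v' * v' := hc1.symm
          _ = S * z * v' * v' := by rw [h2]
          _ = S * z := hc2
      have hE3 : ∀ S z : H →L[ℂ] H, FC Λᶜ S → U * S = -(S * U) → FC Λ z →
          (U * z = z * U ∨ U * z = -(z * U)) → Commute z S := by
        intro S z hSF hSU hzF hzcase
        have hSvF : FC Λᶜ (S * v) := hFCmul Λᶜ S v hSF hFCv
        have hSvU : U * (S * v) = (S * v) * U := by
          calc U * (S * v) = (U * S) * v := by noncomm_ring
            _ = (-(S * U)) * v := by rw [hSU]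
            _ = -(S * (U * v)) := by noncomm_ring
            _ = -(S * (-(v * U))) := by rw [hUv j₀]
            _ = (S * v) * U := by noncomm_ring
        have hSvE : EC Λᶜ (S * v) := fun a ha _ => hSvF a ha
        have hzv : Commute v z := hzF _ hvmem
        have hcom : Commute z (S * v) := by
          rcases hzcase with hzc | hzc
          · exact hE1 (S * v) z hSvE hSvU hzF hzc
          · have hSv' : Commute v' (S * v) := by
              have hx1 : Commute v' S := hSF _ hv'mem
              have hx2 : Commute v' v := by
                have hne : j₁ ≠ j₀ := fun hh => hj₁ (hh ▸ hj₀)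
                exact (hιcomm j₁ j₀ hne pauliX pauliX).map π
              exact hx1.mul_right hx2
            exact hE2 (S * v) z hSvE hSvU hSv' hzF hzc
        have h2 : z * S * v = S * z * v := by
          have hb : (S * v) * z = S * (v * z) := by noncomm_ring
          have hc : S * (v * z) = S * z * v := by rw [hzv.eq]; noncomm_ring
          calc z * S * v = z * (S * v) := by noncomm_ring
            _ = (S * v) * z := hcom.eq
            _ = S * z * v := by rw [hb, hc]
        have hc1 : z * S * v * v = z * S := by
          calc z * S * v * v = (z * S) * (v * v) := by noncomm_ring
            _ = z * S := by rw [hvv j₀, mul_one]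
        have hc2 : S * z * v * v = S * z := by
          calc S * z * v * v = (S * z) * (v * v) := by noncomm_ring
            _ = S * z := by rw [hvv j₀, mul_one]
        rw [commute_iff_eq]
        calc z * S = z * S * v * v := hc1.symm
          _ = S * z * v * v := by rw [h2]
          _ = S * z := hc2
      intro T hT T' hT'
      have hTevF : FC Λᶜ ((2⁻¹ : ℂ) • (T + U * T * U)) :=
        hFCsmul _ _ _ (hFCadd _ _ _ hT (hFCU Λᶜ T hT))
      have hTodF : FC Λᶜ ((2⁻¹ : ℂ) • (T - U * T * U)) :=
        hFCsmul _ _ _ (hFCsub _ _ _ hT (hFCU Λᶜ T hT))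
      have hT'evF : FC Λ ((2⁻¹ : ℂ) • (T' + U * T' * U)) :=
        hFCsmul _ _ _ (hFCadd _ _ _ hT' (hFCU Λ T' hT'))
      have hT'odF : FC Λ ((2⁻¹ : ℂ) • (T' - U * T' * U)) :=
        hFCsmul _ _ _ (hFCsub _ _ _ hT' (hFCU Λ T' hT'))
      have hTevE : EC Λᶜ ((2⁻¹ : ℂ) • (T + U * T * U)) := fun a ha _ => hTevF a ha
      have hc_ee : Commute ((2⁻¹ : ℂ) • (T' + U * T' * U)) ((2⁻¹ : ℂ) • (T + U * T * U)) :=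
        hE1 _ _ hTevE (hpar T).1 hT'evF (hpar T').1
      have hc_oe : Commute ((2⁻¹ : ℂ) • (T' - U * T' * U)) ((2⁻¹ : ℂ) • (T + U * T * U)) :=
        hE2 _ _ hTevE (hpar T).1 (hTevF _ hv'mem) hT'odF (hpar T').2
      have hc_eo : Commute ((2⁻¹ : ℂ) • (T' + U * T' * U)) ((2⁻¹ : ℂ) • (T - U * T * U)) :=
        hE3 _ _ hTodF (hpar T).2 hT'evF (Or.inl (hpar T').1)
      have hc_oo : Commute ((2⁻¹ : ℂ) • (T' - U * T' * U)) ((2⁻¹ : ℂ) • (T - U * T * U)) :=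
        hE3 _ _ hTodF (hpar T).2 hT'odF (Or.inr (hpar T').2)
      have hgoal : Commute ((2⁻¹ : ℂ) • (T' + U * T' * U) + (2⁻¹ : ℂ) • (T' - U * T' * U))
          ((2⁻¹ : ℂ) • (T + U * T * U) + (2⁻¹ : ℂ) • (T - U * T * U)) :=
        Commute.add_right (Commute.add_left hc_ee hc_oe) (Commute.add_left hc_eo hc_oo)
      rw [hhalfV T U, hhalfV T' U] at hgoal
      exact hgoal
    constructor
    · intro h
      exact hii2 (hiii (hi1 h))
    · intro h
      exact hi2 (hiv (hii1 h))
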